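/- arXiv:1903.07617 — 7 statements merged into one kernel-verified Lean document; each statement's English description precedes it below -/
import Mathlib

section
/- Let n ∈ ℝ² be a fixed unit vector, c ∈ ℝ, and let O ⊆ ℝ²×ℝ×ℝ be open. Let u : O → ℝ², v : O → ℝ, p : O → ℝ be C¹ and satisfy the horizontal momentum equation ρ(u_t + (u·∇)u + v u_y) + ∇p = 0 on O. Let S ⊆ O be a relatively open subset of the vertical hyperplane {(x,y,t) : x·n = c}, and assume the impermeability condition u·n = 0 holds at every point of S (a wet portion of a flat vertical wall). Then the normal pressure derivative vanishes on the wall: ∇p·n = 0 at every point of S. -/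
noncomputable section

/-- Space-time points `((x₁,x₂), y, t)`: horizontal position, height, time. -/
abbrev Pt : Type := (ℝ × ℝ) × ℝ × ℝ

/-- Partial derivative `∂_{x₁}`. -/
noncomputable def dX1 (f : Pt → ℝ) (q : Pt) : ℝ :=
  fderiv ℝ f q (((1 : ℝ), (0 : ℝ)), (0 : ℝ), (0 : ℝ))

/-- Partial derivative `∂_{x₂}`. -/
noncomputable def dX2 (f : Pt → ℝ) (q : Pt) : ℝ :=
  fderiv ℝ f q (((0 : ℝ), (1 : ℝ)), (0 : ℝ), (0 : ℝ))

/-- Partial derivative `∂_y`. -/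
noncomputable def dY (f : Pt → ℝ) (q : Pt) : ℝ :=
  fderiv ℝ f q (((0 : ℝ), (0 : ℝ)), (1 : ℝ), (0 : ℝ))

/-- Partial derivative `∂_t`. -/
noncomputable def dT (f : Pt → ℝ) (q : Pt) : ℝ :=
  fderiv ℝ f q (((0 : ℝ), (0 : ℝ)), (0 : ℝ), (1 : ℝ))

/-- On a wet portion `S` of a flat vertical wall
`{x·n = c}` (with constant horizontal unit normal `n`), the impermeability
condition `u·n = 0` and the horizontal momentum equation
`ρ(u_t + (u·∇)u + v u_y) + ∇p = 0` imply `∇p·n = 0` on `S`. -/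
theorem wall_pressure_normal_derivative
    (ρ : ℝ) (hρ : 0 < ρ)
    (n : ℝ × ℝ) (hn : n.1 ^ 2 + n.2 ^ 2 = 1) (c : ℝ)
    (O : Set Pt) (hO : IsOpen O)
    (u : Pt → ℝ × ℝ) (v p : Pt → ℝ)
    (hu : ContDiffOn ℝ 1 u O) (hv : ContDiffOn ℝ 1 v O) (hp : ContDiffOn ℝ 1 p O)
    (hmom1 : ∀ q ∈ O,
      ρ * (dT (fun z => (u z).1) q
        + (u q).1 * dX1 (fun z => (u z).1) q + (u q).2 * dX2 (fun z => (u z).1) q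
        + v q * dY (fun z => (u z).1) q) + dX1 p q = 0)
    (hmom2 : ∀ q ∈ O,
      ρ * (dT (fun z => (u z).2) q
        + (u q).1 * dX1 (fun z => (u z).2) q + (u q).2 * dX2 (fun z => (u z).2) q
        + v q * dY (fun z => (u z).2) q) + dX2 p q = 0)
    (S : Set Pt) (hSO : S ⊆ O)
    -- `S` is a relatively open subset of the vertical hyperplane `{x·n = c}`
    (hSrel : ∃ U : Set Pt, IsOpen U ∧
      S = U ∩ {q : Pt | q.1.1 * n.1 + q.1.2 * n.2 = c})
    -- impermeability on the wall
    (himp : ∀ q ∈ S, (u q).1 * n.1 + (u q).2 * n.2 = 0) :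
    ∀ q ∈ S, dX1 p q * n.1 + dX2 p q * n.2 = 0 := by
  intro q hq
  obtain ⟨U, hUopen, hSeq⟩ := hSrel
  have hqU : q ∈ U := (hSeq ▸ hq).1
  have hqH : q.1.1 * n.1 + q.1.2 * n.2 = c := (hSeq ▸ hq).2
  have hqO : q ∈ O := hSO hq
  have hudiff : DifferentiableAt ℝ u q :=
    (hu.contDiffAt (hO.mem_nhds hqO)).differentiableAt one_ne_zero
  have hu1 : DifferentiableAt ℝ (fun z => (u z).1) q := hudiff.fst
  have hu2 : DifferentiableAt ℝ (fun z => (u z).2) q := hudiff.snd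
  set f : Pt → ℝ := fun z => (u z).1 * n.1 + (u z).2 * n.2 with hfdef
  have hfd : DifferentiableAt ℝ f q := (hu1.mul_const _).add (hu2.mul_const _)
  have hfw : ∀ w : Pt, fderiv ℝ f q w
      = fderiv ℝ (fun z => (u z).1) q w * n.1 + fderiv ℝ (fun z => (u z).2) q w * n.2 := by
    intro w
    have h1 : fderiv ℝ f q = fderiv ℝ (fun z => (u z).1 * n.1) q + fderiv ℝ (fun z => (u z).2 * n.2) q :=
      fderiv_add (hu1.mul_const _) (hu2.mul_const _)
    have h2 : fderiv ℝ (fun z => (u z).1 * n.1) q = n.1 • fderiv ℝ (fun z => (u z).1) q :=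
      fderiv_mul_const hu1 n.1
    have h3 : fderiv ℝ (fun z => (u z).2 * n.2) q = n.2 • fderiv ℝ (fun z => (u z).2) q :=
      fderiv_mul_const hu2 n.2
    rw [h1, h2, h3]
    simp [smul_eq_mul]
    ring
  -- key: fderiv of f vanishes along directions tangent to the wall
  have key : ∀ w : Pt, w.1.1 * n.1 + w.1.2 * n.2 = 0 → fderiv ℝ f q w = 0 := by
    intro w hw
    set g : ℝ → Pt := fun s => q + s • w with hgdef
    have hg0 : g 0 = q := by simp [hgdef]
    have hgderiv : HasDerivAt g w 0 := by
      simpa [hgdef] using ((hasDerivAt_id (0:ℝ)).smul_const w).const_add q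
    have hgcont : Continuous g := by
      exact continuous_const.add (continuous_id.smul continuous_const)
    have hfd' : HasFDerivAt f (fderiv ℝ f q) (g 0) := by rw [hg0]; exact hfd.hasFDerivAt
    have hchain : HasDerivAt (f ∘ g) (fderiv ℝ f q w) 0 := hfd'.comp_hasDerivAt 0 hgderiv
    have hev : (f ∘ g) =ᶠ[nhds (0:ℝ)] fun _ => 0 := by
      have hUnhds : g ⁻¹' U ∈ nhds (0:ℝ) :=
        (hUopen.preimage hgcont).mem_nhds (by rw [Set.mem_preimage, hg0]; exact hqU)
      filter_upwards [hUnhds] with s hs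
      have hplane : (g s).1.1 * n.1 + (g s).1.2 * n.2 = c := by
        have : (g s).1.1 = q.1.1 + s * w.1.1 ∧ (g s).1.2 = q.1.2 + s * w.1.2 := by
          constructor <;> simp [hgdef]
        rw [this.1, this.2]
        linear_combination hqH + s * hw
      have hgS : g s ∈ S := by
        rw [hSeq]
        exact ⟨hs, hplane⟩
      simpa [hfdef] using himp (g s) hgS
    have hzero : HasDerivAt (f ∘ g) 0 0 :=
      (hasDerivAt_const (0:ℝ) (0:ℝ)).congr_of_eventuallyEq hev
    exact hchain.unique hzero
  -- apply key to the tangent vector (u q, v q, 1)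
  have hw0 : ((((u q).1, (u q).2), v q, (1:ℝ)) : Pt).1.1 * n.1
      + ((((u q).1, (u q).2), v q, (1:ℝ)) : Pt).1.2 * n.2 = 0 := himp q hq
  have hk := key _ hw0
  -- decompose the vector into basis directions
  have hdecomp : ∀ (F : Pt → ℝ), DifferentiableAt ℝ F q →
      fderiv ℝ F q ((((u q).1, (u q).2), v q, (1:ℝ)) : Pt)
      = (u q).1 * dX1 F q + (u q).2 * dX2 F q + v q * dY F q + dT F q := by
    intro F hF
    have hv : ((((u q).1, (u q).2), v q, (1:ℝ)) : Pt)
        = (u q).1 • ((((1:ℝ),(0:ℝ)), (0:ℝ), (0:ℝ)) : Pt)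
        + (u q).2 • ((((0:ℝ),(1:ℝ)), (0:ℝ), (0:ℝ)) : Pt)
        + v q • ((((0:ℝ),(0:ℝ)), (1:ℝ), (0:ℝ)) : Pt)
        + (1:ℝ) • ((((0:ℝ),(0:ℝ)), (0:ℝ), (1:ℝ)) : Pt) := by
      simp [Prod.ext_iff]
    rw [hv]
    simp only [map_add, map_smul, smul_eq_mul, dX1, dX2, dY, dT]
    ring
  have hexp := hfw ((((u q).1, (u q).2), v q, (1:ℝ)) : Pt)
  rw [hdecomp _ hu1, hdecomp _ hu2] at hexp
  rw [hexp] at hk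
  have h1 := hmom1 q hqO
  have h2 := hmom2 q hqO
  linear_combination n.1 * h1 + n.2 * h2 - ρ * hk

end
end

section
/- Let n ∈ ℝ² be a fixed unit vector, c ∈ ℝ, and assume u, v, p are C¹ on an open set O ⊆ ℝ²×ℝ×ℝ and satisfy the horizontal momentum equation ρ(u_t + (u·∇)u + v u_y) + ∇p = 0, with u·n = 0 on a relatively open wet-wall set S ⊆ O ∩ {x·n = c}. Let x₀ ∈ ℝ² with x₀·n = c, let η be a C¹ free surface defined on an open neighborhood D ⊆ ℝ² of x₀ and times in an interval I, with (x, η(x,t), t) ∈ O for x ∈ D, and suppose the dynamic condition p(x, η(x,t), t) = 0 holds for all x ∈ D, t ∈ I. If (x₀, η(x₀,t), t) ∈ S, then p_y(x₀, η(x₀,t), t) · (∇η(x₀,t)·n) = 0; in particular, if p_y(x₀, η(x₀,t), t) ≠ 0, then ∂η/∂n := ∇η·n = 0 at (x₀,t), i.e. the free surface meets the flat vertical wall at a right angle. -/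
noncomputable section

/-- Spatial partial derivative `∂_{x₁}` of the free surface `η(x,t)` at fixed time. -/
noncomputable def gX1 (η : (ℝ × ℝ) × ℝ → ℝ) (x : ℝ × ℝ) (t : ℝ) : ℝ :=
  fderiv ℝ (fun x' => η (x', t)) x ((1 : ℝ), (0 : ℝ))

/-- Spatial partial derivative `∂_{x₂}` of the free surface `η(x,t)` at fixed time. -/
noncomputable def gX2 (η : (ℝ × ℝ) × ℝ → ℝ) (x : ℝ × ℝ) (t : ℝ) : ℝ :=
  fderiv ℝ (fun x' => η (x', t)) x ((0 : ℝ), (1 : ℝ))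

/-- Evaluation of a continuous linear functional on `Pt` in the standard basis. -/
lemma clm_eval4 (L : Pt →L[ℝ] ℝ) (a b c d : ℝ) :
    L ((a, b), c, d) = a * L (((1:ℝ),(0:ℝ)),(0:ℝ),(0:ℝ)) + b * L (((0:ℝ),(1:ℝ)),(0:ℝ),(0:ℝ))
      + c * L (((0:ℝ),(0:ℝ)),(1:ℝ),(0:ℝ)) + d * L (((0:ℝ),(0:ℝ)),(0:ℝ),(1:ℝ)) := by
  have h : ((a, b), c, d) = a • (((((1:ℝ),(0:ℝ)),(0:ℝ),(0:ℝ))) : Pt)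
      + b • (((((0:ℝ),(1:ℝ)),(0:ℝ),(0:ℝ))) : Pt)
      + c • (((((0:ℝ),(0:ℝ)),(1:ℝ),(0:ℝ))) : Pt)
      + d • (((((0:ℝ),(0:ℝ)),(0:ℝ),(1:ℝ))) : Pt) := by
    simp [Prod.ext_iff]
  rw [h, map_add, map_add, map_add, map_smul, map_smul, map_smul, map_smul]
  simp [smul_eq_mul]

/-- Evaluation of a continuous linear functional on `ℝ × ℝ` in the standard basis. -/
lemma clm_eval2 (L : (ℝ × ℝ) →L[ℝ] ℝ) (a b : ℝ) :
    L (a, b) = a * L ((1:ℝ),(0:ℝ)) + b * L ((0:ℝ),(1:ℝ)) := by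
  have h : ((a, b) : ℝ × ℝ) = a • (((1:ℝ),(0:ℝ)) : ℝ × ℝ) + b • (((0:ℝ),(1:ℝ)) : ℝ × ℝ) := by
    simp [Prod.ext_iff]
  rw [h, map_add, map_smul, map_smul]
  simp [smul_eq_mul]

/-- Free surface meeting a flat vertical wall: with the
horizontal momentum equation and impermeability `u·n = 0` on a wet-wall set
`S ⊆ {x·n = c}`, and the dynamic condition `p(x, η(x,t), t) = 0` near `x₀` with
`x₀·n = c`, one has `p_y·(∇η·n) = 0` at the contact point; in particular, if
`p_y ≠ 0` there, the free surface meets the wall at a right angle: `∇η·n = 0`. -/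
theorem free_surface_right_angle_flat_wall
    (ρ : ℝ) (hρ : 0 < ρ)
    (n : ℝ × ℝ) (hn : n.1 ^ 2 + n.2 ^ 2 = 1) (c : ℝ)
    (O : Set Pt) (hO : IsOpen O)
    (u : Pt → ℝ × ℝ) (v p : Pt → ℝ)
    (hu : ContDiffOn ℝ 1 u O) (hv : ContDiffOn ℝ 1 v O) (hp : ContDiffOn ℝ 1 p O)
    (hmom1 : ∀ q ∈ O,
      ρ * (dT (fun z => (u z).1) q
        + (u q).1 * dX1 (fun z => (u z).1) q + (u q).2 * dX2 (fun z => (u z).1) q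
        + v q * dY (fun z => (u z).1) q) + dX1 p q = 0)
    (hmom2 : ∀ q ∈ O,
      ρ * (dT (fun z => (u z).2) q
        + (u q).1 * dX1 (fun z => (u z).2) q + (u q).2 * dX2 (fun z => (u z).2) q
        + v q * dY (fun z => (u z).2) q) + dX2 p q = 0)
    (S : Set Pt) (hSO : S ⊆ O)
    (hSrel : ∃ U : Set Pt, IsOpen U ∧
      S = U ∩ {q : Pt | q.1.1 * n.1 + q.1.2 * n.2 = c})
    (himp : ∀ q ∈ S, (u q).1 * n.1 + (u q).2 * n.2 = 0)
    -- the free surface `η` near the wall point `x₀`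
    (x₀ : ℝ × ℝ) (hx₀ : x₀.1 * n.1 + x₀.2 * n.2 = c)
    (D : Set (ℝ × ℝ)) (hD : IsOpen D) (hx₀D : x₀ ∈ D)
    (I : Set ℝ) (hI : I.OrdConnected)
    (η : (ℝ × ℝ) × ℝ → ℝ) (hη : ContDiffOn ℝ 1 η (D ×ˢ I))
    (hsurfO : ∀ x ∈ D, ∀ t ∈ I, ((x, η (x, t), t) : Pt) ∈ O)
    -- the dynamic free-surface condition
    (hdyn : ∀ x ∈ D, ∀ t ∈ I, p (x, η (x, t), t) = 0) :
    ∀ t ∈ I, ((x₀, η (x₀, t), t) : Pt) ∈ S →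
      dY p (x₀, η (x₀, t), t) * (gX1 η x₀ t * n.1 + gX2 η x₀ t * n.2) = 0
      ∧ (dY p (x₀, η (x₀, t), t) ≠ 0 →
          gX1 η x₀ t * n.1 + gX2 η x₀ t * n.2 = 0) := by
  intro t ht hS
  set q₀ : Pt := (x₀, η (x₀, t), t) with hq₀def
  have hq₀O : q₀ ∈ O := hsurfO x₀ hx₀D t ht
  have hnO : O ∈ nhds q₀ := hO.mem_nhds hq₀O
  have huA : DifferentiableAt ℝ u q₀ :=
    (hu.differentiableOn one_ne_zero).differentiableAt hnO
  have hu1 : DifferentiableAt ℝ (fun z => (u z).1) q₀ := huA.fst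
  have hu2 : DifferentiableAt ℝ (fun z => (u z).2) q₀ := huA.snd
  have hpd : DifferentiableAt ℝ p q₀ :=
    (hp.differentiableOn one_ne_zero).differentiableAt hnO
  set L1 : Pt →L[ℝ] ℝ := fderiv ℝ (fun z => (u z).1) q₀ with hL1
  set L2 : Pt →L[ℝ] ℝ := fderiv ℝ (fun z => (u z).2) q₀ with hL2
  set Lp : Pt →L[ℝ] ℝ := fderiv ℝ p q₀ with hLp
  obtain ⟨U, hU, hSU⟩ := hSrel
  have hq₀U : q₀ ∈ U := (hSU ▸ hS).1
  have himp₀ : (u q₀).1 * n.1 + (u q₀).2 * n.2 = 0 := himp q₀ hS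
  -- the tangential direction along which the wall identity holds
  set w : Pt := (((u q₀).1, (u q₀).2), v q₀, 1) with hw
  set f : Pt → ℝ := fun z => (u z).1 * n.1 + (u z).2 * n.2 with hf
  have hfD : HasFDerivAt f (n.1 • L1 + n.2 • L2) q₀ :=
    (hu1.hasFDerivAt.mul_const n.1).add (hu2.hasFDerivAt.mul_const n.2)
  have hγ : HasDerivAt (fun s : ℝ => q₀ + s • w) w 0 := by
    simpa using ((hasDerivAt_id (0:ℝ)).smul_const w).const_add q₀
  have hfD' : HasFDerivAt f (n.1 • L1 + n.2 • L2) ((fun s : ℝ => q₀ + s • w) 0) := by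
    simpa using hfD
  have hcomp : HasDerivAt (fun s : ℝ => f (q₀ + s • w)) ((n.1 • L1 + n.2 • L2) w) 0 :=
    (hfD'.comp_hasDerivAt 0 hγ :)
  have hev : (fun s : ℝ => f (q₀ + s • w)) =ᶠ[nhds (0:ℝ)] fun _ => 0 := by
    have hcont : Continuous (fun s : ℝ => q₀ + s • w) :=
      continuous_const.add (continuous_id.smul continuous_const)
    have hmemU : ∀ᶠ s : ℝ in nhds 0, q₀ + s • w ∈ U := by
      have h0 : q₀ + (0:ℝ) • w ∈ U := by simpa using hq₀U
      exact hcont.continuousAt.eventually_mem (hU.mem_nhds h0)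
    filter_upwards [hmemU] with s hs
    have hSmem : q₀ + s • w ∈ S := by
      rw [hSU]
      refine ⟨hs, ?_⟩
      show (q₀ + s • w).1.1 * n.1 + (q₀ + s • w).1.2 * n.2 = c
      have h1 : (q₀ + s • w).1.1 = x₀.1 + s * (u q₀).1 := by
        simp [hq₀def, hw]
      have h2 : (q₀ + s • w).1.2 = x₀.2 + s * (u q₀).2 := by
        simp [hq₀def, hw]
      rw [h1, h2]
      linear_combination hx₀ + s * himp₀
    exact himp _ hSmem
  have h0 : HasDerivAt (fun s : ℝ => f (q₀ + s • w)) 0 0 :=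
    (hasDerivAt_const (0:ℝ) (0:ℝ)).congr_of_eventuallyEq hev
  have hkey : (n.1 • L1 + n.2 • L2) w = 0 := hcomp.unique h0
  have hkey' : n.1 * (L1 w) + n.2 * (L2 w) = 0 := by
    simpa [ContinuousLinearMap.add_apply, ContinuousLinearMap.smul_apply, smul_eq_mul]
      using hkey
  have hL1w : L1 w = (u q₀).1 * dX1 (fun z => (u z).1) q₀
      + (u q₀).2 * dX2 (fun z => (u z).1) q₀ + v q₀ * dY (fun z => (u z).1) q₀
      + 1 * dT (fun z => (u z).1) q₀ := by
    rw [hw]; exact clm_eval4 L1 _ _ _ _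
  have hL2w : L2 w = (u q₀).1 * dX1 (fun z => (u z).2) q₀
      + (u q₀).2 * dX2 (fun z => (u z).2) q₀ + v q₀ * dY (fun z => (u z).2) q₀
      + 1 * dT (fun z => (u z).2) q₀ := by
    rw [hw]; exact clm_eval4 L2 _ _ _ _
  -- ∂p/∂n = 0 at the wall point
  have hwall : n.1 * dX1 p q₀ + n.2 * dX2 p q₀ = 0 := by
    have h1 := hmom1 q₀ hq₀O
    have h2 := hmom2 q₀ hq₀O
    rw [hL1w, hL2w] at hkey'
    linear_combination n.1 * h1 + n.2 * h2 - ρ * hkey'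
  -- the free surface slice is differentiable
  have hslice : ContDiffOn ℝ 1 (fun x' : ℝ × ℝ => η (x', t)) D := by
    refine hη.comp ((contDiff_id.prodMk contDiff_const).contDiffOn) ?_
    intro x hx
    exact Set.mk_mem_prod hx ht
  have hηd : DifferentiableAt ℝ (fun x' : ℝ × ℝ => η (x', t)) x₀ :=
    (hslice.differentiableOn one_ne_zero).differentiableAt (hD.mem_nhds hx₀D)
  set E : (ℝ × ℝ) →L[ℝ] ℝ := fderiv ℝ (fun x' : ℝ × ℝ => η (x', t)) x₀ with hE
  have hG : HasFDerivAt (fun x : ℝ × ℝ => ((x, η (x, t), t) : Pt))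
      ((ContinuousLinearMap.id ℝ (ℝ × ℝ)).prod
        (E.prod (0 : (ℝ × ℝ) →L[ℝ] ℝ))) x₀ :=
    HasFDerivAt.prodMk (hasFDerivAt_id x₀) (hηd.hasFDerivAt.prodMk (hasFDerivAt_const t x₀))
  have hFc : HasFDerivAt (fun x : ℝ × ℝ => p (x, η (x, t), t))
      (Lp.comp ((ContinuousLinearMap.id ℝ (ℝ × ℝ)).prod
        (E.prod (0 : (ℝ × ℝ) →L[ℝ] ℝ)))) x₀ :=
    hpd.hasFDerivAt.comp x₀ hG
  have hFev : (fun x : ℝ × ℝ => p (x, η (x, t), t)) =ᶠ[nhds x₀] fun _ => 0 := by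
    filter_upwards [hD.mem_nhds hx₀D] with x hx
    exact hdyn x hx t ht
  have hF0 : HasFDerivAt (fun x : ℝ × ℝ => p (x, η (x, t), t))
      (0 : (ℝ × ℝ) →L[ℝ] ℝ) x₀ :=
    (hasFDerivAt_const (0:ℝ) x₀).congr_of_eventuallyEq hFev
  have hFeq := hFc.unique hF0
  have hevaln : Lp (n, E n, 0) = 0 := by
    have := congrArg (fun (T : (ℝ × ℝ) →L[ℝ] ℝ) => T n) hFeq
    simpa using this
  have hEn : E n = n.1 * gX1 η x₀ t + n.2 * gX2 η x₀ t := by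
    have := clm_eval2 E n.1 n.2
    simpa [gX1, gX2, hE] using this
  have hLpn : n.1 * dX1 p q₀ + n.2 * dX2 p q₀ + (E n) * dY p q₀ = 0 := by
    have h := clm_eval4 Lp n.1 n.2 (E n) 0
    have hn' : ((n.1, n.2) : ℝ × ℝ) = n := rfl
    rw [hn'] at h
    rw [h] at hevaln
    simp only [dX1, dX2, dY, dT, ← hLp] at hevaln ⊢
    linarith [hevaln]
  have hmain : dY p q₀ * (gX1 η x₀ t * n.1 + gX2 η x₀ t * n.2) = 0 := by
    rw [hEn] at hLpn
    linear_combination hLpn - hwall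
  refine ⟨hmain, fun hne => ?_⟩
  rcases mul_eq_zero.mp hmain with h | h
  · exact absurd h hne
  · exact h

end
end

section
/- Let r : ℝ → ℝ² be a C² arc-length parametrization of a plane curve Γ, with unit tangent τ(s) := ṙ(s), unit normal ν(s), and signed curvature κ̊(s) defined by the Frenet relation τ̇(s) = κ̊(s)·ν(s). Let u : O → ℝ², v, p : O → ℝ be C¹ on an open set O ⊆ ℝ²×ℝ×ℝ satisfying the horizontal momentum equation ρ(u_t + (u·∇)u + v u_y) + ∇p = 0, and let S be a relatively open subset of the lateral surface {(r(s), y, t)} contained in O on which the impermeability condition u(r(s),y,t)·ν(s) = 0 holds identically. Then at every point of S the normal pressure derivative satisfies ∂p/∂ν := ∇p·ν = −ρ·u_τ²·κ̊, where u_τ := u·τ is the tangential velocity component. -/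
noncomputable section

lemma linH (L : Pt →L[ℝ] ℝ) (w : ℝ × ℝ) :
    L ((w, 0) : Pt) = w.1 * L (((1,0),0,0)) + w.2 * L (((0,1),0,0)) := by
  have h : ((w, 0) : Pt) = w.1 • ((((1:ℝ),(0:ℝ)),(0:ℝ),(0:ℝ)) : Pt)
      + w.2 • ((((0:ℝ),(1:ℝ)),(0:ℝ),(0:ℝ)) : Pt) := by
    simp [Prod.ext_iff]
  rw [h, map_add, map_smul, map_smul, smul_eq_mul, smul_eq_mul]

lemma aux_perp (τ1 τ2 ν1 ν2 u1 u2 : ℝ) (hτ : τ1^2+τ2^2=1) (hν : ν1^2+ν2^2=1)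
    (ho : τ1*ν1+τ2*ν2=0) (hi : u1*ν1+u2*ν2=0) : u2*τ1 - u1*τ2 = 0 := by
  set e := τ1*ν2 - τ2*ν1 with he
  have hν1 : ν1 = -e*τ2 := by rw [he]; linear_combination τ1*ho - ν1*hτ
  have hν2 : ν2 = e*τ1 := by rw [he]; linear_combination τ2*ho - ν2*hτ
  have he2 : e^2 = 1 := by linear_combination hν - (e^2)*hτ + (e*τ2 - ν1)*hν1 - (e*τ1 + ν2)*hν2
  have h0 : e * (u2*τ1 - u1*τ2) = 0 := by linear_combination hi - u1*hν1 - u2*hν2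
  have hne : e ≠ 0 := by intro h; rw [h] at he2; norm_num at he2
  rcases mul_eq_zero.mp h0 with h|h
  · exact absurd h hne
  · exact h

/-- Along the wet part of a vertical cylindrical wall over a C²
arc-length parametrized plane curve `r` with unit tangent `τ = ṙ`, unit normal
`ν` and signed curvature `κ̊` (Frenet: `τ̇ = κ̊ ν`), the horizontal momentum
equation together with the impermeability condition `u·ν = 0` imply
`∂p/∂ν = −ρ u_τ² κ̊`, where `u_τ = u·τ`. -/
theorem curved_wall_pressure_normal_derivative
    (ρ : ℝ) (hρ : 0 < ρ)
    (r : ℝ → ℝ × ℝ) (ν : ℝ → ℝ × ℝ) (κ : ℝ → ℝ)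
    (hr : ContDiff ℝ 2 r)
    -- arc-length parametrization: `τ := ṙ` is a unit vector
    (harc : ∀ s, (deriv r s).1 ^ 2 + (deriv r s).2 ^ 2 = 1)
    -- `ν` is a unit normal field
    (hν_unit : ∀ s, (ν s).1 ^ 2 + (ν s).2 ^ 2 = 1)
    (hν_orth : ∀ s, (deriv r s).1 * (ν s).1 + (deriv r s).2 * (ν s).2 = 0)
    -- Frenet relation `τ̇ = κ̊ ν`
    (hFrenet : ∀ s, deriv (fun s' => deriv r s') s = κ s • ν s)
    (O : Set Pt) (hO : IsOpen O)
    (u : Pt → ℝ × ℝ) (v p : Pt → ℝ)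
    (hu : ContDiffOn ℝ 1 u O) (hv : ContDiffOn ℝ 1 v O) (hp : ContDiffOn ℝ 1 p O)
    (hmom1 : ∀ q ∈ O,
      ρ * (dT (fun z => (u z).1) q
        + (u q).1 * dX1 (fun z => (u z).1) q + (u q).2 * dX2 (fun z => (u z).1) q
        + v q * dY (fun z => (u z).1) q) + dX1 p q = 0)
    (hmom2 : ∀ q ∈ O,
      ρ * (dT (fun z => (u z).2) q
        + (u q).1 * dX1 (fun z => (u z).2) q + (u q).2 * dX2 (fun z => (u z).2) q
        + v q * dY (fun z => (u z).2) q) + dX2 p q = 0)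
    (S : Set Pt) (hSO : S ⊆ O)
    -- `S` is a relatively open subset of the lateral surface over the curve
    (hSrel : ∃ U : Set Pt, IsOpen U ∧
      S = U ∩ {q : Pt | ∃ s : ℝ, q.1 = r s})
    -- impermeability on the wet lateral wall
    (himp : ∀ s y t, ((r s, y, t) : Pt) ∈ S →
      (u (r s, y, t)).1 * (ν s).1 + (u (r s, y, t)).2 * (ν s).2 = 0) :
    ∀ s y t, ((r s, y, t) : Pt) ∈ S →
      dX1 p (r s, y, t) * (ν s).1 + dX2 p (r s, y, t) * (ν s).2 =
        -(ρ * ((u (r s, y, t)).1 * (deriv r s).1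
              + (u (r s, y, t)).2 * (deriv r s).2) ^ 2 * κ s) := by
  intro s y t hq
  obtain ⟨U, hUo, hSeq⟩ := hSrel
  set q : Pt := (r s, y, t) with hqdef
  have hqO : q ∈ O := hSO hq
  have hqU : q ∈ U := by
    have := hq; rw [hSeq] at this; exact this.1
  -- differentiability at q
  have huq : DifferentiableAt ℝ u q :=
    (hu.differentiableOn one_ne_zero).differentiableAt (hO.mem_nhds hqO)
  have hu1 : DifferentiableAt ℝ (fun z => (u z).1) q := huq.fst
  have hu2 : DifferentiableAt ℝ (fun z => (u z).2) q := huq.snd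
  have hrd : Differentiable ℝ r := hr.differentiable (by norm_num)
  have hr1 : ContDiff ℝ 1 (deriv r) := by
    have h2 : ContDiff ℝ ((1:ℕ) + 1) r := by exact_mod_cast hr
    exact_mod_cast (contDiff_succ_iff_deriv.mp h2).2.2
  -- eventual membership in S along the three directions
  have hmemT : ∀ᶠ t' in nhds t, ((r s, y, t') : Pt) ∈ S := by
    have hco : Continuous (fun t' : ℝ => ((r s, y, t') : Pt)) := by fun_prop
    have hop : IsOpen ((fun t' : ℝ => ((r s, y, t') : Pt)) ⁻¹' U) := hUo.preimage hco
    have ht : t ∈ (fun t' : ℝ => ((r s, y, t') : Pt)) ⁻¹' U := hqU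
    filter_upwards [hop.mem_nhds ht] with t' ht'
    rw [hSeq]; exact ⟨ht', ⟨s, rfl⟩⟩
  have hmemY : ∀ᶠ y' in nhds y, ((r s, y', t) : Pt) ∈ S := by
    have hco : Continuous (fun y' : ℝ => ((r s, y', t) : Pt)) := by fun_prop
    have hop : IsOpen ((fun y' : ℝ => ((r s, y', t) : Pt)) ⁻¹' U) := hUo.preimage hco
    have hy : y ∈ (fun y' : ℝ => ((r s, y', t) : Pt)) ⁻¹' U := hqU
    filter_upwards [hop.mem_nhds hy] with y' hy'
    rw [hSeq]; exact ⟨hy', ⟨s, rfl⟩⟩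
  have hmemS : ∀ᶠ s' in nhds s, ((r s', y, t) : Pt) ∈ S := by
    have hco : Continuous (fun s' : ℝ => ((r s', y, t) : Pt)) := by
      exact (hrd.continuous.prodMk continuous_const)
    have hop : IsOpen ((fun s' : ℝ => ((r s', y, t) : Pt)) ⁻¹' U) := hUo.preimage hco
    have hs : s ∈ (fun s' : ℝ => ((r s', y, t) : Pt)) ⁻¹' U := hqU
    filter_upwards [hop.mem_nhds hs] with s' hs'
    rw [hSeq]; exact ⟨hs', ⟨s', rfl⟩⟩
  -- F1 : dT u · ν = 0
  have hcT : HasDerivAt (fun t' : ℝ => ((r s, y, t') : Pt)) ((((0:ℝ),(0:ℝ)),(0:ℝ),(1:ℝ)) : Pt) t :=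
    (hasDerivAt_const t (r s)).prodMk ((hasDerivAt_const t y).prodMk (hasDerivAt_id t))
  have hdT1 : HasDerivAt (fun t' : ℝ => (u ((r s, y, t') : Pt)).1)
      (dT (fun z => (u z).1) q) t := by
    have h := hu1.hasFDerivAt.comp_hasDerivAt t hcT
    exact h
  have hdT2 : HasDerivAt (fun t' : ℝ => (u ((r s, y, t') : Pt)).2)
      (dT (fun z => (u z).2) q) t := by
    have h := hu2.hasFDerivAt.comp_hasDerivAt t hcT
    exact h
  have hF1 : dT (fun z => (u z).1) q * (ν s).1 + dT (fun z => (u z).2) q * (ν s).2 = 0 := by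
    have hφ : HasDerivAt (fun t' : ℝ => (u ((r s, y, t') : Pt)).1 * (ν s).1
        + (u ((r s, y, t') : Pt)).2 * (ν s).2)
        (dT (fun z => (u z).1) q * (ν s).1 + dT (fun z => (u z).2) q * (ν s).2) t :=
      (hdT1.mul_const _).add (hdT2.mul_const _)
    have hev : (fun t' : ℝ => (u ((r s, y, t') : Pt)).1 * (ν s).1
        + (u ((r s, y, t') : Pt)).2 * (ν s).2) =ᶠ[nhds t] (fun _ => (0:ℝ)) := by
      filter_upwards [hmemT] with t' ht'
      exact himp s y t' ht'
    have h0 : HasDerivAt (fun _ : ℝ => (0:ℝ))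
        (dT (fun z => (u z).1) q * (ν s).1 + dT (fun z => (u z).2) q * (ν s).2) t :=
      hφ.congr_of_eventuallyEq hev.symm
    exact h0.unique (hasDerivAt_const t 0)
  -- F2 : dY u · ν = 0
  have hcY : HasDerivAt (fun y' : ℝ => ((r s, y', t) : Pt)) ((((0:ℝ),(0:ℝ)),(1:ℝ),(0:ℝ)) : Pt) y :=
    (hasDerivAt_const y (r s)).prodMk ((hasDerivAt_id y).prodMk (hasDerivAt_const y t))
  have hdY1 : HasDerivAt (fun y' : ℝ => (u ((r s, y', t) : Pt)).1)
      (dY (fun z => (u z).1) q) y := by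
    have h := hu1.hasFDerivAt.comp_hasDerivAt y hcY
    exact h
  have hdY2 : HasDerivAt (fun y' : ℝ => (u ((r s, y', t) : Pt)).2)
      (dY (fun z => (u z).2) q) y := by
    have h := hu2.hasFDerivAt.comp_hasDerivAt y hcY
    exact h
  have hF2 : dY (fun z => (u z).1) q * (ν s).1 + dY (fun z => (u z).2) q * (ν s).2 = 0 := by
    have hφ : HasDerivAt (fun y' : ℝ => (u ((r s, y', t) : Pt)).1 * (ν s).1
        + (u ((r s, y', t) : Pt)).2 * (ν s).2)
        (dY (fun z => (u z).1) q * (ν s).1 + dY (fun z => (u z).2) q * (ν s).2) y :=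
      (hdY1.mul_const _).add (hdY2.mul_const _)
    have hev : (fun y' : ℝ => (u ((r s, y', t) : Pt)).1 * (ν s).1
        + (u ((r s, y', t) : Pt)).2 * (ν s).2) =ᶠ[nhds y] (fun _ => (0:ℝ)) := by
      filter_upwards [hmemY] with y' hy'
      exact himp s y' t hy'
    have h0 : HasDerivAt (fun _ : ℝ => (0:ℝ))
        (dY (fun z => (u z).1) q * (ν s).1 + dY (fun z => (u z).2) q * (ν s).2) y :=
      hφ.congr_of_eventuallyEq hev.symm
    exact h0.unique (hasDerivAt_const y 0)
  -- s-direction derivatives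
  have hcS : HasDerivAt (fun s' : ℝ => ((r s', y, t) : Pt)) ((deriv r s, 0) : Pt) s :=
    (hrd s).hasDerivAt.prodMk (hasDerivAt_const s ((y, t) : ℝ × ℝ))
  have hdS1 : HasDerivAt (fun s' : ℝ => (u ((r s', y, t) : Pt)).1)
      ((deriv r s).1 * dX1 (fun z => (u z).1) q + (deriv r s).2 * dX2 (fun z => (u z).1) q) s := by
    have h := hu1.hasFDerivAt.comp_hasDerivAt s hcS
    rwa [linH] at h
  have hdS2 : HasDerivAt (fun s' : ℝ => (u ((r s', y, t) : Pt)).2)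
      ((deriv r s).1 * dX1 (fun z => (u z).2) q + (deriv r s).2 * dX2 (fun z => (u z).2) q) s := by
    have h := hu2.hasFDerivAt.comp_hasDerivAt s hcS
    rwa [linH] at h
  have hdr : HasDerivAt (deriv r) (κ s • ν s) s := by
    have hd : DifferentiableAt ℝ (deriv r) s := (hr1.differentiable one_ne_zero) s
    have h := hd.hasDerivAt
    rwa [show deriv (deriv r) s = κ s • ν s from hFrenet s] at h
  have hdr1 : HasDerivAt (fun s' : ℝ => (deriv r s').1) (κ s * (ν s).1) s := by
    have h := (ContinuousLinearMap.fst ℝ ℝ ℝ).hasFDerivAt.comp_hasDerivAt s hdr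
    exact h
  have hdr2 : HasDerivAt (fun s' : ℝ => (deriv r s').2) (κ s * (ν s).2) s := by
    have h := (ContinuousLinearMap.snd ℝ ℝ ℝ).hasFDerivAt.comp_hasDerivAt s hdr
    exact h
  -- F3
  have hF3 : (((deriv r s).1 * dX1 (fun z => (u z).2) q + (deriv r s).2 * dX2 (fun z => (u z).2) q)
        * (deriv r s).1 + (u q).2 * (κ s * (ν s).1))
      - (((deriv r s).1 * dX1 (fun z => (u z).1) q + (deriv r s).2 * dX2 (fun z => (u z).1) q)
        * (deriv r s).2 + (u q).1 * (κ s * (ν s).2)) = 0 := by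
    have hφ : HasDerivAt (fun s' : ℝ => (u ((r s', y, t) : Pt)).2 * (deriv r s').1
        - (u ((r s', y, t) : Pt)).1 * (deriv r s').2)
        ((((deriv r s).1 * dX1 (fun z => (u z).2) q + (deriv r s).2 * dX2 (fun z => (u z).2) q)
          * (deriv r s).1 + (u q).2 * (κ s * (ν s).1))
        - (((deriv r s).1 * dX1 (fun z => (u z).1) q + (deriv r s).2 * dX2 (fun z => (u z).1) q)
          * (deriv r s).2 + (u q).1 * (κ s * (ν s).2))) s :=
      (hdS2.mul hdr1).sub (hdS1.mul hdr2)
    have hev : (fun s' : ℝ => (u ((r s', y, t) : Pt)).2 * (deriv r s').1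
        - (u ((r s', y, t) : Pt)).1 * (deriv r s').2) =ᶠ[nhds s] (fun _ => (0:ℝ)) := by
      filter_upwards [hmemS] with s' hs'
      exact aux_perp _ _ _ _ _ _ (harc s') (hν_unit s') (hν_orth s') (himp s' y t hs')
    have h0 : HasDerivAt (fun _ : ℝ => (0:ℝ)) _ s := hφ.congr_of_eventuallyEq hev.symm
    exact h0.unique (hasDerivAt_const s 0)
  -- momentum at q
  have hm1 := hmom1 q hqO
  have hm2 := hmom2 q hqO
  have himpq : (u q).1 * (ν s).1 + (u q).2 * (ν s).2 = 0 := himp s y t hq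
  -- final algebra
  set τ1 := (deriv r s).1 with hτ1
  set τ2 := (deriv r s).2 with hτ2
  set ν1 := (ν s).1
  set ν2 := (ν s).2
  set u1 := (u q).1
  set u2 := (u q).2
  have harcs := harc s
  have hνu := hν_unit s
  have hνo := hν_orth s
  set e := τ1*ν2 - τ2*ν1 with he
  have hν1e : ν1 = -e*τ2 := by rw [he]; linear_combination τ1*hνo - ν1*harcs
  have hν2e : ν2 = e*τ1 := by rw [he]; linear_combination τ2*hνo - ν2*harcs
  have he2 : e^2 = 1 := by
    linear_combination hνu - (e^2)*harcs + (e*τ2 - ν1)*hν1e - (e*τ1 + ν2)*hν2e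
  have htan : u2*τ1 - u1*τ2 = 0 :=
    aux_perp τ1 τ2 ν1 ν2 u1 u2 harcs hνu hνo himpq
  set c := u1 * τ1 + u2 * τ2 with hc
  have hu1c : u1 = c*τ1 := by rw [hc]; linear_combination (-u1)*harcs - τ2*htan
  have hu2c : u2 = c*τ2 := by rw [hc]; linear_combination (-u2)*harcs + τ1*htan
  set a1 := dX1 (fun z => (u z).1) q
  set a2 := dX2 (fun z => (u z).1) q
  set b1 := dX1 (fun z => (u z).2) q
  set b2 := dX2 (fun z => (u z).2) q
  have k3 : (τ1*b1+τ2*b2)*τ1 - (τ1*a1+τ2*a2)*τ2 = κ s * c * e := by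
    linear_combination hF3 + (κ s)*ν2*hu1c + (κ s)*c*τ1*hν2e - (κ s)*ν1*hu2c
      - (κ s)*c*τ2*hν1e + (κ s)*c*e*harcs
  have k4 : u1*(a1*ν1+b1*ν2) + u2*(a2*ν1+b2*ν2) = κ s * c^2 := by
    linear_combination (a1*ν1+b1*ν2)*hu1c + (a2*ν1+b2*ν2)*hu2c
      + c*(τ1*a1+τ2*a2)*hν1e + c*(τ1*b1+τ2*b2)*hν2e + c*e*k3 + (κ s)*c^2*he2
  linear_combination ν1*hm1 + ν2*hm2 - ρ*hF1 - ρ*(v q)*hF2 - ρ*k4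


end
end

section
/- Let r : ℝ → ℝ² be a C² arc-length parametrization of a plane curve Γ with unit tangent τ = ṙ, unit normal ν, and signed curvature κ̊ (τ̇ = κ̊ ν). Assume u, v, p are C¹ on an open set O ⊆ ℝ²×ℝ×ℝ, satisfy the horizontal momentum equation ρ(u_t + (u·∇)u + v u_y) + ∇p = 0, and u·ν = 0 holds on a relatively open wet lateral set S ⊆ O ∩ {(r(s),y,t)}. Let x₀ = r(s₀), let η be a C¹ free surface defined on an open neighborhood D ⊆ ℝ² of x₀ and times in an interval I, with (x, η(x,t), t) ∈ O for x ∈ D, and suppose the dynamic condition p(x, η(x,t), t) = 0 holds for all x ∈ D, t ∈ I. If (x₀, η(x₀,t), t) ∈ S, then at that point p_y · (∇η·ν) = ρ·u_τ²·κ̊, where u_τ = u·τ. In particular the free surface meets the lateral wall at a right angle only where κ̊ = 0 or u_τ = 0 (assuming p_y ≠ 0). -/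
noncomputable section
open Topology

lemma clm_apply4 (L : Pt →L[ℝ] ℝ) (c d e f : ℝ) :
    L ((c, d), e, f) = c * L (((1:ℝ),(0:ℝ)),(0:ℝ),(0:ℝ)) + d * L (((0:ℝ),(1:ℝ)),(0:ℝ),(0:ℝ))
      + e * L (((0:ℝ),(0:ℝ)),(1:ℝ),(0:ℝ)) + f * L (((0:ℝ),(0:ℝ)),(0:ℝ),(1:ℝ)) := by
  have h : ((c, d), e, f) = (c • ((((1:ℝ),(0:ℝ)),(0:ℝ),(0:ℝ)) : Pt) + d • ((((0:ℝ),(1:ℝ)),(0:ℝ),(0:ℝ)) : Pt))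
      + (e • ((((0:ℝ),(0:ℝ)),(1:ℝ),(0:ℝ)) : Pt) + f • ((((0:ℝ),(0:ℝ)),(0:ℝ),(1:ℝ)) : Pt)) := by
    simp [Prod.ext_iff]
  rw [h]
  simp only [map_add, map_smul, smul_eq_mul]
  ring

lemma clm_apply2 (L : (ℝ × ℝ) →L[ℝ] ℝ) (c d : ℝ) :
    L (c, d) = c * L (1, 0) + d * L (0, 1) := by
  have h : ((c, d) : ℝ × ℝ) = c • ((1,0) : ℝ × ℝ) + d • ((0,1) : ℝ × ℝ) := by
    simp [Prod.ext_iff]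
  rw [h]
  simp only [map_add, map_smul, smul_eq_mul]

lemma wall_decomp (a b c d u₁ u₂ : ℝ) (h1 : a^2+b^2 = 1) (h2 : c^2+d^2 = 1)
    (h3 : a*c+b*d = 0) (h4 : u₁*c+u₂*d = 0) :
    u₁ = (u₁*a+u₂*b)*a ∧ u₂ = (u₁*a+u₂*b)*b := by
  have hΔ : (a*d - b*c)^2 = 1 := by
    linear_combination (c^2+d^2)*h1 + h2 - (a*c+b*d)*h3
  have hc : c = -(a*d - b*c)*b := by linear_combination a*h3 - c*h1
  have hd : d = (a*d - b*c)*a := by linear_combination b*h3 - d*h1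
  have hX : (a*d - b*c) * (u₂*a - u₁*b) = 0 := by
    linear_combination h4 - u₁*hc - u₂*hd
  have h5 : u₂*a - u₁*b = 0 := by
    linear_combination (a*d - b*c)*hX - (u₂*a - u₁*b)*hΔ
  constructor
  · linear_combination -u₁*h1 - b*h5
  · linear_combination -u₂*h1 + a*h5
lemma combine_lemma (ρ n₁ n₂ a₀ b₀ k u₁ u₂ v₀ T1 T2 X11 X21 Y1 Y2 X12 X22 P1 P2 Py g1 g2 : ℝ)
    (hm1 : ρ*(T1 + u₁*X11 + u₂*X21 + v₀*Y1) + P1 = 0)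
    (hm2 : ρ*(T2 + u₁*X12 + u₂*X22 + v₀*Y2) + P2 = 0)
    (step1 : T1*n₁ + T2*n₂ = 0)
    (step2 : Y1*n₁ + Y2*n₂ = 0)
    (key3 : (a₀*X11 + b₀*X21)*n₁ + (a₀*X12 + b₀*X22)*n₂ = (u₁*a₀+u₂*b₀)*k)
    (hdec1 : u₁ = (u₁*a₀+u₂*b₀)*a₀) (hdec2 : u₂ = (u₁*a₀+u₂*b₀)*b₀)
    (step5 : n₁*P1 + n₂*P2 + (n₁*g1 + n₂*g2)*Py = 0) :
    Py * (g1*n₁ + g2*n₂) = ρ * (u₁*a₀+u₂*b₀)^2 * k := by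
  linear_combination step5 - n₁*hm1 - n₂*hm2 + ρ*step1 + ρ*v₀*step2
    + ρ*(X11*n₁+X12*n₂)*hdec1 + ρ*(X21*n₁+X22*n₂)*hdec2 + ρ*(u₁*a₀+u₂*b₀)*key3

/-- Contact angle of the free surface with a curved vertical
lateral wall: with the horizontal momentum equation, impermeability `u·ν = 0`
on the wet lateral set `S` over the C² arc-length curve `r` (unit tangent
`τ = ṙ`, unit normal `ν`, signed curvature `κ̊` with `τ̇ = κ̊ ν`), and the
dynamic condition `p(x, η(x,t), t) = 0` near `x₀ = r s₀`, one has
`p_y·(∇η·ν) = ρ u_τ² κ̊` at the contact point; in particular, if `p_y ≠ 0`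
there, then `∇η·ν = 0` forces `κ̊ = 0` or `u_τ = 0`. -/
theorem free_surface_contact_angle_curved_wall
    (ρ : ℝ) (hρ : 0 < ρ)
    (r : ℝ → ℝ × ℝ) (ν : ℝ → ℝ × ℝ) (κ : ℝ → ℝ)
    (hr : ContDiff ℝ 2 r)
    (harc : ∀ s, (deriv r s).1 ^ 2 + (deriv r s).2 ^ 2 = 1)
    (hν_unit : ∀ s, (ν s).1 ^ 2 + (ν s).2 ^ 2 = 1)
    (hν_orth : ∀ s, (deriv r s).1 * (ν s).1 + (deriv r s).2 * (ν s).2 = 0)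
    (hFrenet : ∀ s, deriv (fun s' => deriv r s') s = κ s • ν s)
    (O : Set Pt) (hO : IsOpen O)
    (u : Pt → ℝ × ℝ) (v p : Pt → ℝ)
    (hu : ContDiffOn ℝ 1 u O) (hv : ContDiffOn ℝ 1 v O) (hp : ContDiffOn ℝ 1 p O)
    (hmom1 : ∀ q ∈ O,
      ρ * (dT (fun z => (u z).1) q
        + (u q).1 * dX1 (fun z => (u z).1) q + (u q).2 * dX2 (fun z => (u z).1) q
        + v q * dY (fun z => (u z).1) q) + dX1 p q = 0)
    (hmom2 : ∀ q ∈ O,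
      ρ * (dT (fun z => (u z).2) q
        + (u q).1 * dX1 (fun z => (u z).2) q + (u q).2 * dX2 (fun z => (u z).2) q
        + v q * dY (fun z => (u z).2) q) + dX2 p q = 0)
    (S : Set Pt) (hSO : S ⊆ O)
    (hSrel : ∃ U : Set Pt, IsOpen U ∧
      S = U ∩ {q : Pt | ∃ s : ℝ, q.1 = r s})
    (himp : ∀ s y t, ((r s, y, t) : Pt) ∈ S →
      (u (r s, y, t)).1 * (ν s).1 + (u (r s, y, t)).2 * (ν s).2 = 0)
    -- the free surface `η` near the wall point `x₀ = r s₀`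
    (s₀ : ℝ)
    (D : Set (ℝ × ℝ)) (hD : IsOpen D) (hx₀D : r s₀ ∈ D)
    (I : Set ℝ) (hI : I.OrdConnected)
    (η : (ℝ × ℝ) × ℝ → ℝ) (hη : ContDiffOn ℝ 1 η (D ×ˢ I))
    (hsurfO : ∀ x ∈ D, ∀ t ∈ I, ((x, η (x, t), t) : Pt) ∈ O)
    (hdyn : ∀ x ∈ D, ∀ t ∈ I, p (x, η (x, t), t) = 0) :
    ∀ t ∈ I, ((r s₀, η (r s₀, t), t) : Pt) ∈ S →
      (dY p (r s₀, η (r s₀, t), t)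
          * (gX1 η (r s₀) t * (ν s₀).1 + gX2 η (r s₀) t * (ν s₀).2) =
        ρ * ((u (r s₀, η (r s₀, t), t)).1 * (deriv r s₀).1
            + (u (r s₀, η (r s₀, t), t)).2 * (deriv r s₀).2) ^ 2 * κ s₀)
      ∧ (dY p (r s₀, η (r s₀, t), t) ≠ 0 →
          gX1 η (r s₀) t * (ν s₀).1 + gX2 η (r s₀) t * (ν s₀).2 = 0 →
            κ s₀ = 0 ∨
              (u (r s₀, η (r s₀, t), t)).1 * (deriv r s₀).1
                + (u (r s₀, η (r s₀, t), t)).2 * (deriv r s₀).2 = 0) := by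
  intro t ht hS
  obtain ⟨W, hW, hSeq⟩ := hSrel
  set y₀ := η (r s₀, t) with hy₀def
  have hq₀O : ((r s₀, y₀, t) : Pt) ∈ O := hsurfO _ hx₀D t ht
  have hq₀W : ((r s₀, y₀, t) : Pt) ∈ W := by
    have h := hS; rw [hSeq] at h; exact h.1
  have memS : ∀ z : Pt, z ∈ W → (∃ s, z.1 = r s) → z ∈ S := by
    intro z h1 h2; rw [hSeq]; exact ⟨h1, h2⟩
  have hONhds : O ∈ 𝓝 ((r s₀, y₀, t) : Pt) := hO.mem_nhds hq₀O
  have hud : DifferentiableAt ℝ u (r s₀, y₀, t) :=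
    (hu.differentiableOn one_ne_zero).differentiableAt hONhds
  have hu1d : DifferentiableAt ℝ (fun z => (u z).1) (r s₀, y₀, t) := hud.fst
  have hu2d : DifferentiableAt ℝ (fun z => (u z).2) (r s₀, y₀, t) := hud.snd
  have hpd : DifferentiableAt ℝ p (r s₀, y₀, t) :=
    (hp.differentiableOn one_ne_zero).differentiableAt hONhds
  -- Step 1 : time derivative of impermeability
  have hcurveT : HasDerivAt (fun τ : ℝ => ((r s₀, y₀, τ) : Pt))
      ((((0:ℝ),(0:ℝ)),(0:ℝ),(1:ℝ)) : Pt) t :=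
    HasDerivAt.prodMk (hasDerivAt_const t (r s₀)) (HasDerivAt.prodMk (hasDerivAt_const t y₀) (hasDerivAt_id t))
  have hT1 : HasDerivAt (fun τ : ℝ => (u ((r s₀, y₀, τ) : Pt)).1)
      (dT (fun z => (u z).1) (r s₀, y₀, t)) t :=
    HasFDerivAt.comp_hasDerivAt (l := fun z => (u z).1) t hu1d.hasFDerivAt hcurveT
  have hT2 : HasDerivAt (fun τ : ℝ => (u ((r s₀, y₀, τ) : Pt)).2)
      (dT (fun z => (u z).2) (r s₀, y₀, t)) t :=
    HasFDerivAt.comp_hasDerivAt (l := fun z => (u z).2) t hu2d.hasFDerivAt hcurveT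
  have hevT : (fun τ : ℝ => (u ((r s₀, y₀, τ) : Pt)).1 * (ν s₀).1
      + (u ((r s₀, y₀, τ) : Pt)).2 * (ν s₀).2) =ᶠ[nhds t] (fun _ => (0:ℝ)) := by
    have hevW : ∀ᶠ τ in nhds t, ((r s₀, y₀, τ) : Pt) ∈ W :=
      hcurveT.continuousAt.eventually_mem (hW.mem_nhds hq₀W)
    filter_upwards [hevW] with τ hτ
    exact himp s₀ y₀ τ (memS _ hτ ⟨s₀, rfl⟩)
  have step1 : dT (fun z => (u z).1) (r s₀, y₀, t) * (ν s₀).1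
      + dT (fun z => (u z).2) (r s₀, y₀, t) * (ν s₀).2 = 0 :=
    ((hT1.mul_const _).add (hT2.mul_const _)).unique
      ((hasDerivAt_const t (0:ℝ)).congr_of_eventuallyEq hevT)
  -- Step 2 : y derivative of impermeability
  have hcurveY : HasDerivAt (fun y : ℝ => ((r s₀, y, t) : Pt))
      ((((0:ℝ),(0:ℝ)),(1:ℝ),(0:ℝ)) : Pt) y₀ :=
    HasDerivAt.prodMk (hasDerivAt_const y₀ (r s₀)) (HasDerivAt.prodMk (hasDerivAt_id y₀) (hasDerivAt_const y₀ t))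
  have hY1 : HasDerivAt (fun y : ℝ => (u ((r s₀, y, t) : Pt)).1)
      (dY (fun z => (u z).1) (r s₀, y₀, t)) y₀ :=
    HasFDerivAt.comp_hasDerivAt (l := fun z => (u z).1) y₀ hu1d.hasFDerivAt hcurveY
  have hY2 : HasDerivAt (fun y : ℝ => (u ((r s₀, y, t) : Pt)).2)
      (dY (fun z => (u z).2) (r s₀, y₀, t)) y₀ :=
    HasFDerivAt.comp_hasDerivAt (l := fun z => (u z).2) y₀ hu2d.hasFDerivAt hcurveY
  have hevY : (fun y : ℝ => (u ((r s₀, y, t) : Pt)).1 * (ν s₀).1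
      + (u ((r s₀, y, t) : Pt)).2 * (ν s₀).2) =ᶠ[nhds y₀] (fun _ => (0:ℝ)) := by
    have hevW : ∀ᶠ y in nhds y₀, ((r s₀, y, t) : Pt) ∈ W :=
      hcurveY.continuousAt.eventually_mem (hW.mem_nhds hq₀W)
    filter_upwards [hevW] with y hy
    exact himp s₀ y t (memS _ hy ⟨s₀, rfl⟩)
  have step2 : dY (fun z => (u z).1) (r s₀, y₀, t) * (ν s₀).1
      + dY (fun z => (u z).2) (r s₀, y₀, t) * (ν s₀).2 = 0 :=
    ((hY1.mul_const _).add (hY2.mul_const _)).unique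
      ((hasDerivAt_const y₀ (0:ℝ)).congr_of_eventuallyEq hevY)
  -- Step 3 : tangential derivative of impermeability
  have hr1 : ContDiff ℝ 1 (deriv r) := by
    have h2 : ContDiff ℝ ((1 : WithTop ℕ∞) + 1) r := by
      have : ((1 : WithTop ℕ∞) + 1) = 2 := by norm_num
      rw [this]; exact hr
    exact (contDiff_succ_iff_deriv.mp h2).2.2
  have hrdiff : Differentiable ℝ r := hr.differentiable (by norm_num)
  have hγs : HasDerivAt (fun s : ℝ => ((r s, y₀, t) : Pt))
      ((deriv r s₀, (0:ℝ), (0:ℝ)) : Pt) s₀ :=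
    HasDerivAt.prodMk (hrdiff s₀).hasDerivAt (hasDerivAt_const s₀ ((y₀, t) : ℝ × ℝ))
  obtain ⟨A1, hA1⟩ : ∃ x : ℝ,
      x = fderiv ℝ (fun z => (u z).1) (r s₀, y₀, t) ((deriv r s₀, (0:ℝ), (0:ℝ)) : Pt) := ⟨_, rfl⟩
  obtain ⟨A2, hA2⟩ : ∃ x : ℝ,
      x = fderiv ℝ (fun z => (u z).2) (r s₀, y₀, t) ((deriv r s₀, (0:ℝ), (0:ℝ)) : Pt) := ⟨_, rfl⟩
  have hF1 : HasDerivAt (fun s : ℝ => (u ((r s, y₀, t) : Pt)).1) A1 s₀ := by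
    rw [hA1]; exact hu1d.hasFDerivAt.comp_hasDerivAt s₀ hγs
  have hF2 : HasDerivAt (fun s : ℝ => (u ((r s, y₀, t) : Pt)).2) A2 s₀ := by
    rw [hA2]; exact hu2d.hasFDerivAt.comp_hasDerivAt s₀ hγs
  have hτd : HasDerivAt (deriv r) (κ s₀ • ν s₀) s₀ := by
    have h := ((hr1.differentiable one_ne_zero) s₀).hasDerivAt
    have hfr : deriv (deriv r) s₀ = κ s₀ • ν s₀ := hFrenet s₀
    rwa [hfr] at h
  have ha' : HasDerivAt (fun s => (deriv r s).1) (κ s₀ * (ν s₀).1) s₀ := by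
    have h : HasDerivAt (fun s => (deriv r s).1) ((κ s₀ • ν s₀).1) s₀ :=
      (ContinuousLinearMap.fst ℝ ℝ ℝ).hasFDerivAt.comp_hasDerivAt s₀ hτd
    simpa [Prod.smul_fst, smul_eq_mul] using h
  have hb' : HasDerivAt (fun s => (deriv r s).2) (κ s₀ * (ν s₀).2) s₀ := by
    have h : HasDerivAt (fun s => (deriv r s).2) ((κ s₀ • ν s₀).2) s₀ :=
      (ContinuousLinearMap.snd ℝ ℝ ℝ).hasFDerivAt.comp_hasDerivAt s₀ hτd
    simpa [Prod.smul_snd, smul_eq_mul] using h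
  have hevSs : ∀ᶠ s in nhds s₀, ((r s, y₀, t) : Pt) ∈ S := by
    have hevW : ∀ᶠ s in nhds s₀, ((r s, y₀, t) : Pt) ∈ W :=
      hγs.continuousAt.eventually_mem (hW.mem_nhds hq₀W)
    filter_upwards [hevW] with s hs
    exact memS _ hs ⟨s, rfl⟩
  obtain ⟨Up, hUp⟩ : ∃ x : ℝ, x = A1 * (deriv r s₀).1
      + (u ((r s₀, y₀, t) : Pt)).1 * (κ s₀ * (ν s₀).1)
      + (A2 * (deriv r s₀).2 + (u ((r s₀, y₀, t) : Pt)).2 * (κ s₀ * (ν s₀).2)) := ⟨_, rfl⟩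
  have hU' : HasDerivAt (fun s : ℝ => (u ((r s, y₀, t) : Pt)).1 * (deriv r s).1
      + (u ((r s, y₀, t) : Pt)).2 * (deriv r s).2) Up s₀ := by
    rw [hUp]; exact (hF1.mul ha').add (hF2.mul hb')
  have hkey1 : A1 = Up * (deriv r s₀).1
      + ((u ((r s₀, y₀, t) : Pt)).1 * (deriv r s₀).1
        + (u ((r s₀, y₀, t) : Pt)).2 * (deriv r s₀).2) * (κ s₀ * (ν s₀).1) := by
    refine hF1.unique ?_
    refine (hU'.mul ha').congr_of_eventuallyEq ?_
    filter_upwards [hevSs] with s hs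
    exact (wall_decomp _ _ _ _ _ _ (harc s) (hν_unit s) (hν_orth s) (himp s y₀ t hs)).1
  have hkey2 : A2 = Up * (deriv r s₀).2
      + ((u ((r s₀, y₀, t) : Pt)).1 * (deriv r s₀).1
        + (u ((r s₀, y₀, t) : Pt)).2 * (deriv r s₀).2) * (κ s₀ * (ν s₀).2) := by
    refine hF2.unique ?_
    refine (hU'.mul hb').congr_of_eventuallyEq ?_
    filter_upwards [hevSs] with s hs
    exact (wall_decomp _ _ _ _ _ _ (harc s) (hν_unit s) (hν_orth s) (himp s y₀ t hs)).2
  have key3 : A1 * (ν s₀).1 + A2 * (ν s₀).2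
      = ((u ((r s₀, y₀, t) : Pt)).1 * (deriv r s₀).1
        + (u ((r s₀, y₀, t) : Pt)).2 * (deriv r s₀).2) * κ s₀ := by
    have h1 := hν_orth s₀
    have h2 := hν_unit s₀
    linear_combination (ν s₀).1 * hkey1 + (ν s₀).2 * hkey2 + Up * h1
      + ((u ((r s₀, y₀, t) : Pt)).1 * (deriv r s₀).1
        + (u ((r s₀, y₀, t) : Pt)).2 * (deriv r s₀).2) * κ s₀ * h2
  -- express A1, A2 through the partial derivatives
  have hA1X : A1 = (deriv r s₀).1 * dX1 (fun z => (u z).1) (r s₀, y₀, t)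
      + (deriv r s₀).2 * dX2 (fun z => (u z).1) (r s₀, y₀, t) := by
    rw [hA1]
    show fderiv ℝ (fun z => (u z).1) (r s₀, y₀, t)
        ((((deriv r s₀).1, (deriv r s₀).2), (0:ℝ), (0:ℝ)) : Pt)
      = (deriv r s₀).1 * fderiv ℝ (fun z => (u z).1) (r s₀, y₀, t) (((1:ℝ),(0:ℝ)),(0:ℝ),(0:ℝ))
      + (deriv r s₀).2 * fderiv ℝ (fun z => (u z).1) (r s₀, y₀, t) (((0:ℝ),(1:ℝ)),(0:ℝ),(0:ℝ))
    rw [clm_apply4]; ring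
  have hA2X : A2 = (deriv r s₀).1 * dX1 (fun z => (u z).2) (r s₀, y₀, t)
      + (deriv r s₀).2 * dX2 (fun z => (u z).2) (r s₀, y₀, t) := by
    rw [hA2]
    show fderiv ℝ (fun z => (u z).2) (r s₀, y₀, t)
        ((((deriv r s₀).1, (deriv r s₀).2), (0:ℝ), (0:ℝ)) : Pt)
      = (deriv r s₀).1 * fderiv ℝ (fun z => (u z).2) (r s₀, y₀, t) (((1:ℝ),(0:ℝ)),(0:ℝ),(0:ℝ))
      + (deriv r s₀).2 * fderiv ℝ (fun z => (u z).2) (r s₀, y₀, t) (((0:ℝ),(1:ℝ)),(0:ℝ),(0:ℝ))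
    rw [clm_apply4]; ring
  have key3X : ((deriv r s₀).1 * dX1 (fun z => (u z).1) (r s₀, y₀, t)
        + (deriv r s₀).2 * dX2 (fun z => (u z).1) (r s₀, y₀, t)) * (ν s₀).1
      + ((deriv r s₀).1 * dX1 (fun z => (u z).2) (r s₀, y₀, t)
        + (deriv r s₀).2 * dX2 (fun z => (u z).2) (r s₀, y₀, t)) * (ν s₀).2
      = ((u ((r s₀, y₀, t) : Pt)).1 * (deriv r s₀).1
        + (u ((r s₀, y₀, t) : Pt)).2 * (deriv r s₀).2) * κ s₀ := by
    linear_combination key3 - (ν s₀).1 * hA1X - (ν s₀).2 * hA2X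
  -- Step 5 : differentiate the dynamic condition along the wall normal
  have hηd : DifferentiableAt ℝ (fun x : ℝ × ℝ => η (x, t)) (r s₀) := by
    have hmap : Set.MapsTo (fun x : ℝ × ℝ => ((x, t) : (ℝ × ℝ) × ℝ)) D (D ×ˢ I) :=
      fun x hx => Set.mem_prod.mpr ⟨hx, ht⟩
    have h1 : ContDiffOn ℝ 1 (fun x : ℝ × ℝ => η (x, t)) D :=
      hη.comp ((contDiff_id.prodMk contDiff_const).contDiffOn) hmap
    exact (h1.differentiableOn one_ne_zero).differentiableAt (hD.mem_nhds hx₀D)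
  obtain ⟨Lη, hLη⟩ : ∃ L : (ℝ × ℝ) →L[ℝ] ℝ,
      L = fderiv ℝ (fun x : ℝ × ℝ => η (x, t)) (r s₀) := ⟨_, rfl⟩
  have hG : HasFDerivAt (fun x : ℝ × ℝ => ((x, η (x, t), t) : Pt))
      ((ContinuousLinearMap.id ℝ (ℝ × ℝ)).prod (Lη.prod (0 : (ℝ × ℝ) →L[ℝ] ℝ))) (r s₀) := by
    rw [hLη]
    exact HasFDerivAt.prodMk (hasFDerivAt_id _) (HasFDerivAt.prodMk hηd.hasFDerivAt (hasFDerivAt_const t _))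
  have hPG : HasFDerivAt (fun x : ℝ × ℝ => p ((x, η (x, t), t) : Pt))
      ((fderiv ℝ p (r s₀, y₀, t)).comp
        ((ContinuousLinearMap.id ℝ (ℝ × ℝ)).prod (Lη.prod (0 : (ℝ × ℝ) →L[ℝ] ℝ)))) (r s₀) :=
    hpd.hasFDerivAt.comp (r s₀) hG
  have hev0 : (fun x : ℝ × ℝ => p ((x, η (x, t), t) : Pt)) =ᶠ[nhds (r s₀)] (fun _ => (0:ℝ)) := by
    filter_upwards [hD.mem_nhds hx₀D] with x hx
    exact hdyn x hx t ht
  have hL0 : (fderiv ℝ p (r s₀, y₀, t)).comp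
      ((ContinuousLinearMap.id ℝ (ℝ × ℝ)).prod (Lη.prod (0 : (ℝ × ℝ) →L[ℝ] ℝ))) = 0 :=
    hPG.unique ((hasFDerivAt_const (0:ℝ) (r s₀)).congr_of_eventuallyEq hev0)
  have happ := ContinuousLinearMap.ext_iff.mp hL0 (((ν s₀).1, (ν s₀).2) : ℝ × ℝ)
  simp only [ContinuousLinearMap.comp_apply, ContinuousLinearMap.prod_apply,
    ContinuousLinearMap.coe_id', id_eq, ContinuousLinearMap.zero_apply] at happ
  rw [clm_apply4, clm_apply2 Lη, hLη] at happ
  have step5 : (ν s₀).1 * dX1 p (r s₀, y₀, t) + (ν s₀).2 * dX2 p (r s₀, y₀, t)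
      + ((ν s₀).1 * gX1 η (r s₀) t + (ν s₀).2 * gX2 η (r s₀) t) * dY p (r s₀, y₀, t) = 0 := by
    unfold dX1 dX2 dY gX1 gX2
    linear_combination happ
  -- assemble everything
  have hdec := wall_decomp (deriv r s₀).1 (deriv r s₀).2 (ν s₀).1 (ν s₀).2
    (u ((r s₀, y₀, t) : Pt)).1 (u ((r s₀, y₀, t) : Pt)).2
    (harc s₀) (hν_unit s₀) (hν_orth s₀) (himp s₀ y₀ t hS)
  have main : dY p (r s₀, y₀, t)
      * (gX1 η (r s₀) t * (ν s₀).1 + gX2 η (r s₀) t * (ν s₀).2)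
      = ρ * ((u ((r s₀, y₀, t) : Pt)).1 * (deriv r s₀).1
          + (u ((r s₀, y₀, t) : Pt)).2 * (deriv r s₀).2) ^ 2 * κ s₀ := by
    have hm1 := hmom1 _ hq₀O
    have hm2 := hmom2 _ hq₀O
    exact combine_lemma ρ (ν s₀).1 (ν s₀).2 (deriv r s₀).1 (deriv r s₀).2 (κ s₀)
      (u ((r s₀, y₀, t) : Pt)).1 (u ((r s₀, y₀, t) : Pt)).2 (v ((r s₀, y₀, t) : Pt))
      _ _ _ _ _ _ _ _ _ _ _ _ _
      hm1 hm2 step1 step2 (by linear_combination key3X) hdec.1 hdec.2 step5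
  refine ⟨main, ?_⟩
  intro hpy hcontact
  rw [hcontact, mul_zero] at main
  have hρ' : ρ ≠ 0 := ne_of_gt hρ
  have h2 : ((u ((r s₀, y₀, t) : Pt)).1 * (deriv r s₀).1
      + (u ((r s₀, y₀, t) : Pt)).2 * (deriv r s₀).2) ^ 2 * κ s₀ = 0 := by
    apply mul_left_cancel₀ hρ'
    rw [mul_zero]
    linear_combination -main
  rcases mul_eq_zero.mp h2 with h3 | h3
  · right
    exact (pow_eq_zero_iff two_ne_zero).mp h3
  · left; exact h3

end
end

section
/- Assume the inner-domain SGN system holds: h, d : D×I → ℝ are prescribed C³ functions with Q := d + h > 0, u̲ : D×I → ℝ² is C², and the mass equation Q_t + div(Q u̲) = 0 and the momentum equation u̲_t + (u̲·∇)u̲ + ∇P/(ρQ) = (p̌ ∇h + p̂ ∇d)/(ρQ) hold, where R₁ := D(div u̲) − (div u̲)², R₂ := D²h, and the pressure fields are related by P = p̌ Q − ρgQ²/2 + ρ(Q³R₁/6 + Q²R₂/2) and p̂ = p̌ − ρgQ + ρ(Q²R₁/2 + Q R₂). Define the total energy density ℰ by ℰ/ρ := |u̲|²/2 + (Q²/6)(div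 u̲)² + (Q/2)(div u̲)·Dh + (Dh)²/2 + g(Q − 2h)/2. Then the total energy balance holds at every point: (Qℰ)_t + div((Qℰ + P)u̲) = −p̌ h_t − p̂ d_t. In particular, if h and d are time-independent this is a local conservation law. -/
noncomputable section

/-- Horizontal space-time points `((x₁,x₂), t)`. -/
abbrev Qt : Type := (ℝ × ℝ) × ℝ

/-- Partial derivative `∂_{x₁}`. -/
noncomputable def pX1 (f : Qt → ℝ) (q : Qt) : ℝ :=
  fderiv ℝ f q (((1 : ℝ), (0 : ℝ)), (0 : ℝ))

/-- Partial derivative `∂_{x₂}`. -/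
noncomputable def pX2 (f : Qt → ℝ) (q : Qt) : ℝ :=
  fderiv ℝ f q (((0 : ℝ), (1 : ℝ)), (0 : ℝ))

/-- Partial derivative `∂_t`. -/
noncomputable def pT (f : Qt → ℝ) (q : Qt) : ℝ :=
  fderiv ℝ f q (((0 : ℝ), (0 : ℝ)), (1 : ℝ))

/-- Horizontal divergence of a plane vector field. -/
noncomputable def divV (w : Qt → ℝ × ℝ) (q : Qt) : ℝ :=
  pX1 (fun z => (w z).1) q + pX2 (fun z => (w z).2) q

/-- Material derivative `Df := f_t + u·∇f`. -/
noncomputable def matD (u : Qt → ℝ × ℝ) (f : Qt → ℝ) (q : Qt) : ℝ :=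
  pT f q + (u q).1 * pX1 f q + (u q).2 * pX2 f q

/-- Acceleration term `R₁ := D(div u) − (div u)²` of the inner SGN model. -/
noncomputable def accR1 (u : Qt → ℝ × ℝ) (q : Qt) : ℝ :=
  matD u (divV u) q - (divV u q) ^ 2

/-- Acceleration term `R₂ := D²h` of the inner SGN model. -/
noncomputable def accR2 (u : Qt → ℝ × ℝ) (h : Qt → ℝ) (q : Qt) : ℝ :=
  matD u (fun z => matD u h z) q

/-- Inner SGN total energy density `ℰ`. -/
noncomputable def innerE (ρ g : ℝ) (u : Qt → ℝ × ℝ) (h d : Qt → ℝ) (q : Qt) : ℝ :=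
  ρ * (((u q).1 ^ 2 + (u q).2 ^ 2) / 2
    + (d q + h q) ^ 2 / 6 * (divV u q) ^ 2
    + (d q + h q) / 2 * (divV u q) * matD u h q
    + (matD u h q) ^ 2 / 2
    + g * ((d q + h q) - 2 * h q) / 2)

section Tooling

variable {f g : Qt → ℝ} {q v : Qt}

theorem fdA (hf : DifferentiableAt ℝ f q) (hg : DifferentiableAt ℝ g q) :
    fderiv ℝ (fun z => f z + g z) q v = fderiv ℝ f q v + fderiv ℝ g q v := by
  rw [fderiv_fun_add hf hg]; rfl

theorem fdM (hf : DifferentiableAt ℝ f q) (hg : DifferentiableAt ℝ g q) :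
    fderiv ℝ (fun z => f z * g z) q v = fderiv ℝ f q v * g q + f q * fderiv ℝ g q v := by
  rw [fderiv_fun_mul hf hg]; simp; ring

theorem fdS (hf : DifferentiableAt ℝ f q) (hg : DifferentiableAt ℝ g q) :
    fderiv ℝ (fun z => f z - g z) q v = fderiv ℝ f q v - fderiv ℝ g q v := by
  rw [fderiv_fun_sub hf hg]; rfl

theorem fdDC (c : ℝ) (hf : DifferentiableAt ℝ f q) :
    fderiv ℝ (fun z => f z / c) q v = fderiv ℝ f q v / c := by
  simp only [div_eq_mul_inv]
  rw [fderiv_mul_const hf]; simp; ring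

theorem fdCM (c : ℝ) (hf : DifferentiableAt ℝ f q) :
    fderiv ℝ (fun z => c * f z) q v = c * fderiv ℝ f q v := by
  rw [fderiv_const_mul hf]; rfl

theorem fdSq (hf : DifferentiableAt ℝ f q) :
    fderiv ℝ (fun z => f z ^ 2) q v = 2 * f q * fderiv ℝ f q v := by
  have e : (fun z => f z ^ 2) = fun z => f z * f z := by ext z; ring
  rw [e, fdM hf hf]; ring

theorem fdC (c : ℝ) : fderiv ℝ (fun _ : Qt => c) q v = 0 := by simp

end Tooling

set_option maxHeartbeats 4000000 in
/-- Total-energy balance of the inner-domain SGN model: under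
the mass and momentum equations with the SGN pressure relations, the energy
density `ℰ` satisfies `(Qℰ)_t + div((Qℰ + P)u̲) = −p̌ h_t − p̂ d_t`; in
particular, for time-independent `h` and `d` this is a local conservation law. -/
theorem sgn_inner_energy_balance
    (ρ g : ℝ) (hρ : 0 < ρ)
    (D : Set (ℝ × ℝ)) (hD : IsOpen D)
    (I : Set ℝ) (hIopen : IsOpen I) (hIord : I.OrdConnected)
    (h d : Qt → ℝ) (u : Qt → ℝ × ℝ) (P pc ph : Qt → ℝ)
    (hh : ContDiffOn ℝ 3 h (D ×ˢ I)) (hd : ContDiffOn ℝ 3 d (D ×ˢ I))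
    (hu : ContDiffOn ℝ 2 u (D ×ˢ I)) (hP : ContDiffOn ℝ 1 P (D ×ˢ I))
    (hQpos : ∀ q ∈ D ×ˢ I, 0 < d q + h q)
    -- pressure relations `P = p̌Q − ρgQ²/2 + ρ(Q³R₁/6 + Q²R₂/2)`
    (hPrel : ∀ q ∈ D ×ˢ I,
      P q = pc q * (d q + h q) - ρ * g * (d q + h q) ^ 2 / 2
        + ρ * ((d q + h q) ^ 3 * accR1 u q / 6
             + (d q + h q) ^ 2 * accR2 u h q / 2))
    -- and `p̂ = p̌ − ρgQ + ρ(Q²R₁/2 + QR₂)`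
    (hphrel : ∀ q ∈ D ×ˢ I,
      ph q = pc q - ρ * g * (d q + h q)
        + ρ * ((d q + h q) ^ 2 * accR1 u q / 2 + (d q + h q) * accR2 u h q))
    -- mass equation `Q_t + div(Q u̲) = 0`
    (hmass : ∀ q ∈ D ×ˢ I,
      pT (fun z => d z + h z) q
        + pX1 (fun z => (d z + h z) * (u z).1) q
        + pX2 (fun z => (d z + h z) * (u z).2) q = 0)
    -- momentum equation `u̲_t + (u̲·∇)u̲ + ∇P/(ρQ) = (p̌∇h + p̂∇d)/(ρQ)`
    (hmom1 : ∀ q ∈ D ×ˢ I,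
      matD u (fun z => (u z).1) q + pX1 P q / (ρ * (d q + h q)) =
        (pc q * pX1 h q + ph q * pX1 d q) / (ρ * (d q + h q)))
    (hmom2 : ∀ q ∈ D ×ˢ I,
      matD u (fun z => (u z).2) q + pX2 P q / (ρ * (d q + h q)) =
        (pc q * pX2 h q + ph q * pX2 d q) / (ρ * (d q + h q))) :
    (∀ q ∈ D ×ˢ I,
      pT (fun z => (d z + h z) * innerE ρ g u h d z) q
        + pX1 (fun z => ((d z + h z) * innerE ρ g u h d z + P z) * (u z).1) q
        + pX2 (fun z => ((d z + h z) * innerE ρ g u h d z + P z) * (u z).2) q =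
        -(pc q * pT h q) - ph q * pT d q)
    ∧ ((∀ q ∈ D ×ˢ I, pT h q = 0) → (∀ q ∈ D ×ˢ I, pT d q = 0) →
      ∀ q ∈ D ×ˢ I,
        pT (fun z => (d z + h z) * innerE ρ g u h d z) q
          + pX1 (fun z => ((d z + h z) * innerE ρ g u h d z + P z) * (u z).1) q
          + pX2 (fun z => ((d z + h z) * innerE ρ g u h d z + P z) * (u z).2) q = 0) := by
  have main : ∀ q ∈ D ×ˢ I,
      pT (fun z => (d z + h z) * innerE ρ g u h d z) q
        + pX1 (fun z => ((d z + h z) * innerE ρ g u h d z + P z) * (u z).1) q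
        + pX2 (fun z => ((d z + h z) * innerE ρ g u h d z + P z) * (u z).2) q =
        -(pc q * pT h q) - ph q * pT d q := by
    intro q hq
    have hqn : D ×ˢ I ∈ nhds q := (hD.prod hIopen).mem_nhds hq
    have ch : ContDiffAt ℝ 3 h q := hh.contDiffAt hqn
    have cd : ContDiffAt ℝ 3 d q := hd.contDiffAt hqn
    have cu : ContDiffAt ℝ 2 u q := hu.contDiffAt hqn
    have cP : ContDiffAt ℝ 1 P q := hP.contDiffAt hqn
    have dh : DifferentiableAt ℝ h q := ch.differentiableAt (by norm_num)
    have dd : DifferentiableAt ℝ d q := cd.differentiableAt (by norm_num)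
    have du : DifferentiableAt ℝ u q := cu.differentiableAt (by norm_num)
    have dP : DifferentiableAt ℝ P q := cP.differentiableAt (by norm_num)
    -- second-order atoms for h
    have hHd : ∀ v : Qt, DifferentiableAt ℝ (fun z => fderiv ℝ h z v) q := by
      intro v
      have c2 : ContDiffAt ℝ 2 (fderiv ℝ h) q := ch.fderiv_right (by norm_num)
      exact (c2.clm_apply contDiffAt_const).differentiableAt (by norm_num)
    have hHt := hHd (((0 : ℝ), (0 : ℝ)), (1 : ℝ))
    have hH1 := hHd (((1 : ℝ), (0 : ℝ)), (0 : ℝ))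
    have hH2 := hHd (((0 : ℝ), (1 : ℝ)), (0 : ℝ))
    -- second-order atoms for u-components
    have hA1 : DifferentiableAt ℝ
        (fun z => fderiv ℝ (fun w => (u w).1) z (((1 : ℝ), (0 : ℝ)), (0 : ℝ))) q := by
      have c2 : ContDiffAt ℝ 1 (fderiv ℝ (fun w => (u w).1)) q :=
        (cu.fst).fderiv_right (by norm_num)
      exact (c2.clm_apply contDiffAt_const).differentiableAt (by norm_num)
    have hA2 : DifferentiableAt ℝ
        (fun z => fderiv ℝ (fun w => (u w).2) z (((0 : ℝ), (1 : ℝ)), (0 : ℝ))) q := by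
      have c2 : ContDiffAt ℝ 1 (fderiv ℝ (fun w => (u w).2)) q :=
        (cu.snd).fderiv_right (by norm_num)
      exact (c2.clm_apply contDiffAt_const).differentiableAt (by norm_num)
    -- fderiv of `divV u` decomposes into atoms
    have hdiv : ∀ v : Qt, fderiv ℝ (divV u) q v =
        fderiv ℝ (fun z => fderiv ℝ (fun w => (u w).1) z (((1 : ℝ), (0 : ℝ)), (0 : ℝ))) q v
        + fderiv ℝ (fun z => fderiv ℝ (fun w => (u w).2) z (((0 : ℝ), (1 : ℝ)), (0 : ℝ))) q v := by
      intro v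
      show fderiv ℝ (fun z =>
          fderiv ℝ (fun w => (u w).1) z (((1 : ℝ), (0 : ℝ)), (0 : ℝ))
          + fderiv ℝ (fun w => (u w).2) z (((0 : ℝ), (1 : ℝ)), (0 : ℝ))) q v = _
      exact fdA hA1 hA2
    -- specialize and normalize hypotheses
    have hm := hmass q hq
    have hm1 := hmom1 q hq
    have hm2 := hmom2 q hq
    have hPr := hPrel q hq
    have hph := hphrel q hq
    simp (disch := fun_prop) only [innerE, accR1, accR2, matD, divV, pT, pX1, pX2,
      fdA, fdM, fdS, fdDC, fdCM, fdSq, fdC, hdiv] at hm hm1 hm2 hPr hph ⊢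
    -- clear denominators in the momentum equations
    have hQ0 : (0 : ℝ) < d q + h q := hQpos q hq
    have hne : ρ * (d q + h q) ≠ 0 := by positivity
    have hρ0 : ρ ≠ 0 := ne_of_gt hρ
    have hQne : d q + h q ≠ 0 := ne_of_gt hQ0
    field_simp at hm1 hm2
    simp only [Prod.mk_zero_zero] at hm hm1 hm2 hPr hph ⊢
    linear_combination (pc q - ρ * g * h q + ρ * (((u q).1^2 + (u q).2^2)/2 + ((fderiv ℝ h q) ((0 : ℝ × ℝ), (1 : ℝ)) + (u q).1 * (fderiv ℝ h q) (((1:ℝ),(0:ℝ)), (0:ℝ)) + (u q).2 * (fderiv ℝ h q) (((0:ℝ),(1:ℝ)), (0:ℝ)))^2/2 + (d q + h q) * ((fderiv ℝ (fun z => (u z).1) q) (((1:ℝ),(0:ℝ)), (0:ℝ)) + (fderiv ℝ (fun z => (u z).2) q) (((0:ℝ),(1:ℝ)), (0:ℝ))) * ((fderiv ℝ h q) ((0 : ℝ × ℝ), (1 : ℝ)) + (u q).1 * (fderiv ℝ h q) (((1:ℝ),(0:ℝ)), (0:ℝ)) + (u q).2 * (fderiv ℝ h q) (((0:ℝ),(1:ℝ)),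 (0:ℝ))) + (d q + h q)^2 * (((fderiv ℝ (fun z => (fderiv ℝ (fun z => (u z).1) z) (((1:ℝ),(0:ℝ)), (0:ℝ))) q) ((0 : ℝ × ℝ), (1 : ℝ)) + (fderiv ℝ (fun z => (fderiv ℝ (fun z => (u z).2) z) (((0:ℝ),(1:ℝ)), (0:ℝ))) q) ((0 : ℝ × ℝ), (1 : ℝ))) + (u q).1 * ((fderiv ℝ (fun z => (fderiv ℝ (fun z => (u z).1) z) (((1:ℝ),(0:ℝ)), (0:ℝ))) q) (((1:ℝ),(0:ℝ)), (0:ℝ)) + (fderiv ℝ (fun z => (fderiv ℝ (fun z => (u z).2) z) (((0:ℝ),(1:ℝ)), (0:ℝ))) q) (((1:ℝ),(0:ℝ)), (0:ℝ))) + (u q).2 * ((fderiv ℝ (fun z => (fderiv ℝ (fun z => (u z).1) z) (((1:ℝ),(0:ℝ)), (0:ℝ))) q) (((0:ℝ),(1:ℝ)), (0:ℝ)) + (fderiv ℝ (fun z => (fderiv ℝ (fun z => (u z).2) z) (((0:ℝ),(1:ℝ)), (0:ℝ))) q) (((0:ℝ),(1:ℝ)), (0:ℝ))))/2 + (d q +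 h q) * (((fderiv ℝ (fun z => (fderiv ℝ h z) ((0 : ℝ × ℝ), (1 : ℝ))) q) ((0 : ℝ × ℝ), (1 : ℝ)) + (fderiv ℝ (fun z => (u z).1) q) ((0 : ℝ × ℝ), (1 : ℝ)) * (fderiv ℝ h q) (((1:ℝ),(0:ℝ)), (0:ℝ)) + (u q).1 * (fderiv ℝ (fun z => (fderiv ℝ h z) (((1:ℝ),(0:ℝ)), (0:ℝ))) q) ((0 : ℝ × ℝ), (1 : ℝ)) + (fderiv ℝ (fun z => (u z).2) q) ((0 : ℝ × ℝ), (1 : ℝ)) * (fderiv ℝ h q) (((0:ℝ),(1:ℝ)), (0:ℝ)) + (u q).2 * (fderiv ℝ (fun z => (fderiv ℝ h z) (((0:ℝ),(1:ℝ)), (0:ℝ))) q) ((0 : ℝ × ℝ), (1 : ℝ))) + (u q).1 * ((fderiv ℝ (fun z => (fderiv ℝ h z) ((0 : ℝ × ℝ), (1 : ℝ))) q) (((1:ℝ),(0:ℝ)), (0:ℝ)) + (fderiv ℝ (fun z => (u z).1) q) (((1:ℝ),(0:ℝ)), (0:ℝ)) * (fderiv ℝ h q) (((1:ℝ),(0:ℝ)),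 (0:ℝ)) + (u q).1 * (fderiv ℝ (fun z => (fderiv ℝ h z) (((1:ℝ),(0:ℝ)), (0:ℝ))) q) (((1:ℝ),(0:ℝ)), (0:ℝ)) + (fderiv ℝ (fun z => (u z).2) q) (((1:ℝ),(0:ℝ)), (0:ℝ)) * (fderiv ℝ h q) (((0:ℝ),(1:ℝ)), (0:ℝ)) + (u q).2 * (fderiv ℝ (fun z => (fderiv ℝ h z) (((0:ℝ),(1:ℝ)), (0:ℝ))) q) (((1:ℝ),(0:ℝ)), (0:ℝ))) + (u q).2 * ((fderiv ℝ (fun z => (fderiv ℝ h z) ((0 : ℝ × ℝ), (1 : ℝ))) q) (((0:ℝ),(1:ℝ)), (0:ℝ)) + (fderiv ℝ (fun z => (u z).1) q) (((0:ℝ),(1:ℝ)), (0:ℝ)) * (fderiv ℝ h q) (((1:ℝ),(0:ℝ)), (0:ℝ)) + (u q).1 * (fderiv ℝ (fun z => (fderiv ℝ h z) (((1:ℝ),(0:ℝ)), (0:ℝ))) q) (((0:ℝ),(1:ℝ)), (0:ℝ)) + (fderiv ℝ (fun z => (u z).2) q) (((0:ℝ),(1:ℝ)), (0:ℝ)) *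 (fderiv ℝ h q) (((0:ℝ),(1:ℝ)), (0:ℝ)) + (u q).2 * (fderiv ℝ (fun z => (fderiv ℝ h z) (((0:ℝ),(1:ℝ)), (0:ℝ))) q) (((0:ℝ),(1:ℝ)), (0:ℝ)))))) * hm + (u q).1 * hm1 + (u q).2 * hm2 + ((fderiv ℝ (fun z => (u z).1) q) (((1:ℝ),(0:ℝ)), (0:ℝ)) + (fderiv ℝ (fun z => (u z).2) q) (((0:ℝ),(1:ℝ)), (0:ℝ))) * hPr + ((fderiv ℝ d q) ((0 : ℝ × ℝ), (1 : ℝ)) + (u q).1 * (fderiv ℝ d q) (((1:ℝ),(0:ℝ)), (0:ℝ)) + (u q).2 * (fderiv ℝ d q) (((0:ℝ),(1:ℝ)), (0:ℝ))) * hph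
  refine ⟨main, fun hT0 hD0 q hq => ?_⟩
  have := main q hq
  rw [hT0 q hq, hD0 q hq] at this
  simpa using this

end
end

section
/- Let u : U×I → ℝ² be C¹ and f, g : U×I → ℝ be C² on an open set U ⊆ ℝ² times an interval I, and let D(·) := (·)_t + u·∇(·) denote the material derivative. Then at every point: ∇f ∧ ∇(Dg) = D(∇f ∧ ∇g) − ∇(Df) ∧ ∇g + (∇f ∧ ∇g)·div u. -/
noncomputable section

/-- Wedge of spatial gradients `∇f ∧ ∇g := f_{x₁} g_{x₂} − f_{x₂} g_{x₁}`. -/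
noncomputable def wedgeGrad (f g : Qt → ℝ) (q : Qt) : ℝ :=
  pX1 f q * pX2 g q - pX2 f q * pX1 g q

/-- The unit vector in the `x₁` direction. -/
def vE1 : Qt := (((1 : ℝ), (0 : ℝ)), (0 : ℝ))

/-- The unit vector in the `x₂` direction. -/
def vE2 : Qt := (((0 : ℝ), (1 : ℝ)), (0 : ℝ))

/-- The unit vector in the `t` direction. -/
def vT : Qt := (((0 : ℝ), (0 : ℝ)), (1 : ℝ))

lemma pX1_eq (f : Qt → ℝ) (q : Qt) : pX1 f q = fderiv ℝ f q vE1 := rfl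
lemma pX2_eq (f : Qt → ℝ) (q : Qt) : pX2 f q = fderiv ℝ f q vE2 := rfl
lemma pT_eq (f : Qt → ℝ) (q : Qt) : pT f q = fderiv ℝ f q vT := rfl

lemma diff_fderiv_apply {h : Qt → ℝ} {q : Qt} (hh : ContDiffAt ℝ 2 h q) (b : Qt) :
    DifferentiableAt ℝ (fun z => fderiv ℝ h z b) q :=
  ((hh.fderiv_right (m := 1) (by norm_num)).differentiableAt one_ne_zero).clm_apply
    (differentiableAt_const b)

lemma fderiv_fderiv_apply {h : Qt → ℝ} {q : Qt} (hh : ContDiffAt ℝ 2 h q) (a b : Qt) :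
    fderiv ℝ (fun z => fderiv ℝ h z b) q a = fderiv ℝ (fderiv ℝ h) q a b := by
  rw [fderiv_clm_apply ((hh.fderiv_right (m := 1) (by norm_num)).differentiableAt one_ne_zero)
    (differentiableAt_const b)]
  simp

lemma fderiv_matD {u : Qt → ℝ × ℝ} {f : Qt → ℝ} {q : Qt}
    (hu : ContDiffAt ℝ 1 u q) (hf : ContDiffAt ℝ 2 f q) (a : Qt) :
    fderiv ℝ (fun z => fderiv ℝ f z vT + (u z).1 * fderiv ℝ f z vE1
        + (u z).2 * fderiv ℝ f z vE2) q a =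
      fderiv ℝ (fun z => fderiv ℝ f z vT) q a
      + fderiv ℝ (fun z => (u z).1) q a * fderiv ℝ f q vE1
      + (u q).1 * fderiv ℝ (fun z => fderiv ℝ f z vE1) q a
      + fderiv ℝ (fun z => (u z).2) q a * fderiv ℝ f q vE2
      + (u q).2 * fderiv ℝ (fun z => fderiv ℝ f z vE2) q a := by
  have hu1 : DifferentiableAt ℝ (fun z => (u z).1) q := (hu.differentiableAt one_ne_zero).fst
  have hu2 : DifferentiableAt ℝ (fun z => (u z).2) q := (hu.differentiableAt one_ne_zero).snd
  have hT : DifferentiableAt ℝ (fun z => fderiv ℝ f z vT) q := diff_fderiv_apply hf vT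
  have h1 : DifferentiableAt ℝ (fun z => fderiv ℝ f z vE1) q := diff_fderiv_apply hf vE1
  have h2 : DifferentiableAt ℝ (fun z => fderiv ℝ f z vE2) q := diff_fderiv_apply hf vE2
  rw [fderiv_fun_add (hT.fun_add (hu1.fun_mul h1)) (hu2.fun_mul h2), fderiv_fun_add hT (hu1.fun_mul h1),
    fderiv_fun_mul hu1 h1, fderiv_fun_mul hu2 h2]
  simp only [ContinuousLinearMap.add_apply, ContinuousLinearMap.smul_apply, smul_eq_mul]
  ring

lemma fderiv_wedge {f g : Qt → ℝ} {q : Qt}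
    (hf : ContDiffAt ℝ 2 f q) (hg : ContDiffAt ℝ 2 g q) (a : Qt) :
    fderiv ℝ (fun z => fderiv ℝ f z vE1 * fderiv ℝ g z vE2
        - fderiv ℝ f z vE2 * fderiv ℝ g z vE1) q a =
      fderiv ℝ (fun z => fderiv ℝ f z vE1) q a * fderiv ℝ g q vE2
      + fderiv ℝ f q vE1 * fderiv ℝ (fun z => fderiv ℝ g z vE2) q a
      - fderiv ℝ (fun z => fderiv ℝ f z vE2) q a * fderiv ℝ g q vE1
      - fderiv ℝ f q vE2 * fderiv ℝ (fun z => fderiv ℝ g z vE1) q a := by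
  have hf1 : DifferentiableAt ℝ (fun z => fderiv ℝ f z vE1) q := diff_fderiv_apply hf vE1
  have hf2 : DifferentiableAt ℝ (fun z => fderiv ℝ f z vE2) q := diff_fderiv_apply hf vE2
  have hg1 : DifferentiableAt ℝ (fun z => fderiv ℝ g z vE1) q := diff_fderiv_apply hg vE1
  have hg2 : DifferentiableAt ℝ (fun z => fderiv ℝ g z vE2) q := diff_fderiv_apply hg vE2
  rw [fderiv_fun_sub (hf1.fun_mul hg2) (hf2.fun_mul hg1), fderiv_fun_mul hf1 hg2, fderiv_fun_mul hf2 hg1]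
  simp only [ContinuousLinearMap.sub_apply, ContinuousLinearMap.add_apply,
    ContinuousLinearMap.smul_apply, smul_eq_mul]
  ring

/-- For C² scalar fields `f, g` and a C¹ velocity field `u`
with material derivative `D(·) = (·)_t + u·∇(·)`, one has
`∇f ∧ ∇(Dg) = D(∇f ∧ ∇g) − ∇(Df) ∧ ∇g + (∇f ∧ ∇g)·div u`. -/
theorem wedge_gradient_material_identity
    (U : Set (ℝ × ℝ)) (hU : IsOpen U)
    (I : Set ℝ) (hIopen : IsOpen I) (hIord : I.OrdConnected)
    (u : Qt → ℝ × ℝ) (f g : Qt → ℝ)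
    (hu : ContDiffOn ℝ 1 u (U ×ˢ I))
    (hf : ContDiffOn ℝ 2 f (U ×ˢ I)) (hg : ContDiffOn ℝ 2 g (U ×ˢ I)) :
    ∀ q ∈ U ×ˢ I,
      wedgeGrad f (fun z => matD u g z) q =
        matD u (fun z => wedgeGrad f g z) q
          - wedgeGrad (fun z => matD u f z) g q
          + wedgeGrad f g q * divV u q := by
  intro q hq
  have hs : IsOpen (U ×ˢ I) := hU.prod hIopen
  have huq : ContDiffAt ℝ 1 u q := hu.contDiffAt (hs.mem_nhds hq)
  have hfq : ContDiffAt ℝ 2 f q := hf.contDiffAt (hs.mem_nhds hq)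
  have hgq : ContDiffAt ℝ 2 g q := hg.contDiffAt (hs.mem_nhds hq)
  have hsymf := hfq.isSymmSndFDerivAt (by simp)
  have hsymg := hgq.isSymmSndFDerivAt (by simp)
  simp only [wedgeGrad, matD, divV, pX1_eq, pX2_eq, pT_eq]
  rw [fderiv_matD huq hgq vE1, fderiv_matD huq hgq vE2,
    fderiv_matD huq hfq vE1, fderiv_matD huq hfq vE2,
    fderiv_wedge hfq hgq vT, fderiv_wedge hfq hgq vE1, fderiv_wedge hfq hgq vE2]
  simp only [fderiv_fderiv_apply hfq, fderiv_fderiv_apply hgq,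
    hsymf.eq vE2 vE1, hsymf.eq vT vE1, hsymf.eq vT vE2,
    hsymg.eq vE2 vE1, hsymg.eq vT vE1, hsymg.eq vT vE2]
  ring

end
end

section
/- Let u : U×I → ℝ² be C¹, f, g : U×I → ℝ be C², and Q : U×I → ℝ be C¹ with Q > 0 on an open set U ⊆ ℝ² times an interval I, with material derivative D(·) := (·)_t + u·∇(·). If the mass equation Q_t + div(Q u) = 0 holds (equivalently div u = −DQ/Q), then at every point: ∇f ∧ ∇(Dg) = Q·D((∇f ∧ ∇g)/Q) − ∇(Df) ∧ ∇g. -/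
noncomputable section

/-! Auxiliary directional-derivative lemmas. -/

lemma pd_add {a b : Qt → ℝ} {q : Qt} (v : Qt)
    (ha : DifferentiableAt ℝ a q) (hb : DifferentiableAt ℝ b q) :
    fderiv ℝ (fun z => a z + b z) q v = fderiv ℝ a q v + fderiv ℝ b q v := by
  rw [fderiv_fun_add ha hb, ContinuousLinearMap.add_apply]

lemma pd_mul {a b : Qt → ℝ} {q : Qt} (v : Qt)
    (ha : DifferentiableAt ℝ a q) (hb : DifferentiableAt ℝ b q) :
    fderiv ℝ (fun z => a z * b z) q v
      = fderiv ℝ a q v * b q + a q * fderiv ℝ b q v := by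
  rw [fderiv_fun_mul ha hb, ContinuousLinearMap.add_apply, ContinuousLinearMap.smul_apply,
    ContinuousLinearMap.smul_apply]
  simp [smul_eq_mul]; ring

lemma pd_sub {a b : Qt → ℝ} {q : Qt} (v : Qt)
    (ha : DifferentiableAt ℝ a q) (hb : DifferentiableAt ℝ b q) :
    fderiv ℝ (fun z => a z - b z) q v = fderiv ℝ a q v - fderiv ℝ b q v := by
  rw [fderiv_fun_sub ha hb, ContinuousLinearMap.sub_apply]

lemma pd_div {a b : Qt → ℝ} {q : Qt} (v : Qt)
    (ha : DifferentiableAt ℝ a q) (hb : DifferentiableAt ℝ b q) (hbne : b q ≠ 0) :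
    fderiv ℝ (fun z => a z / b z) q v
      = (fderiv ℝ a q v * b q - a q * fderiv ℝ b q v) / b q ^ 2 := by
  have hc : DifferentiableAt ℝ (fun z => a z / b z) q := by
    simp only [div_eq_mul_inv]; exact ha.mul (hb.inv hbne)
  have hev : (fun z => a z / b z * b z) =ᶠ[nhds q] a := by
    filter_upwards [hb.continuousAt.eventually_ne hbne] with z hz
    field_simp
  have h1 : fderiv ℝ (fun z => a z / b z * b z) q v = fderiv ℝ a q v := by
    rw [hev.fderiv_eq]
  rw [pd_mul v hc hb] at h1
  field_simp at h1 ⊢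
  linear_combination h1

lemma pd_second {g : Qt → ℝ} {q : Qt} (hg : ContDiffAt ℝ 2 g q) (v w : Qt) :
    fderiv ℝ (fun z => fderiv ℝ g z w) q v = fderiv ℝ (fun z => fderiv ℝ g z v) q w := by
  have hd : DifferentiableAt ℝ (fderiv ℝ g) q :=
    (hg.fderiv_right (m := 1) (by norm_num)).differentiableAt one_ne_zero
  have key : ∀ a b : Qt, fderiv ℝ (fun z => fderiv ℝ g z a) q b
      = fderiv ℝ (fderiv ℝ g) q b a := by
    intro a b
    rw [fderiv_clm_apply hd (differentiableAt_const a)]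
    simp
  rw [key, key, hg.isSymmSndFDerivAt (by simp [minSmoothness_of_isRCLikeNormedField])]

lemma pd_matD {u : Qt → ℝ × ℝ} {g : Qt → ℝ} {q : Qt} (v w1 w2 wt : Qt)
    (hdu : DifferentiableAt ℝ u q) (hdg' : DifferentiableAt ℝ (fderiv ℝ g) q) :
    fderiv ℝ (fun z => fderiv ℝ g z wt + (u z).1 * fderiv ℝ g z w1
        + (u z).2 * fderiv ℝ g z w2) q v
      = fderiv ℝ (fun z => fderiv ℝ g z wt) q v
        + (fderiv ℝ (fun z => (u z).1) q v * fderiv ℝ g q w1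
            + (u q).1 * fderiv ℝ (fun z => fderiv ℝ g z w1) q v)
        + (fderiv ℝ (fun z => (u z).2) q v * fderiv ℝ g q w2
            + (u q).2 * fderiv ℝ (fun z => fderiv ℝ g z w2) q v) := by
  have hga : ∀ a : Qt, DifferentiableAt ℝ (fun z => fderiv ℝ g z a) q := fun a =>
    hdg'.clm_apply (differentiableAt_const a)
  have h1 : DifferentiableAt ℝ (fun z => (u z).1 * fderiv ℝ g z w1) q :=
    hdu.fst.mul (hga w1)
  have h2 : DifferentiableAt ℝ (fun z => (u z).2 * fderiv ℝ g z w2) q :=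
    hdu.snd.mul (hga w2)
  rw [pd_add (a := fun z => fderiv ℝ g z wt + (u z).1 * fderiv ℝ g z w1) v ((hga wt).add h1) h2, pd_add v (hga wt) h1,
    pd_mul v hdu.fst (hga w1), pd_mul v hdu.snd (hga w2)]

/-- For C² scalar fields `f, g`, a C¹ velocity `u` and a
positive C¹ field `Q` satisfying the mass equation `Q_t + div(Qu) = 0`, one has
`∇f ∧ ∇(Dg) = Q·D((∇f ∧ ∇g)/Q) − ∇(Df) ∧ ∇g`. -/
theorem wedge_gradient_mass_identity
    (U : Set (ℝ × ℝ)) (hU : IsOpen U)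
    (I : Set ℝ) (hIopen : IsOpen I) (hIord : I.OrdConnected)
    (u : Qt → ℝ × ℝ) (f g Q : Qt → ℝ)
    (hu : ContDiffOn ℝ 1 u (U ×ˢ I))
    (hf : ContDiffOn ℝ 2 f (U ×ˢ I)) (hg : ContDiffOn ℝ 2 g (U ×ˢ I))
    (hQ : ContDiffOn ℝ 1 Q (U ×ˢ I))
    (hQpos : ∀ q ∈ U ×ˢ I, 0 < Q q)
    (hmass : ∀ q ∈ U ×ˢ I,
      pT Q q + pX1 (fun z => Q z * (u z).1) q + pX2 (fun z => Q z * (u z).2) q = 0) :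
    ∀ q ∈ U ×ˢ I,
      wedgeGrad f (fun z => matD u g z) q =
        Q q * matD u (fun z => wedgeGrad f g z / Q z) q
          - wedgeGrad (fun z => matD u f z) g q := by
  intro q hq
  have hmem : U ×ˢ I ∈ nhds q := (hU.prod hIopen).mem_nhds hq
  have hfq : ContDiffAt ℝ 2 f q := (hf q hq).contDiffAt hmem
  have hgq : ContDiffAt ℝ 2 g q := (hg q hq).contDiffAt hmem
  have huq : ContDiffAt ℝ 1 u q := (hu q hq).contDiffAt hmem
  have hQq : ContDiffAt ℝ 1 Q q := (hQ q hq).contDiffAt hmem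
  have hdu : DifferentiableAt ℝ u q := huq.differentiableAt one_ne_zero
  have hdQ : DifferentiableAt ℝ Q q := hQq.differentiableAt one_ne_zero
  have hdf' : DifferentiableAt ℝ (fderiv ℝ f) q :=
    (hfq.fderiv_right (m := 1) (by norm_num)).differentiableAt one_ne_zero
  have hdg' : DifferentiableAt ℝ (fderiv ℝ g) q :=
    (hgq.fderiv_right (m := 1) (by norm_num)).differentiableAt one_ne_zero
  have hdfv : ∀ a : Qt, DifferentiableAt ℝ (fun z => fderiv ℝ f z a) q := fun a =>
    hdf'.clm_apply (differentiableAt_const a)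
  have hdgv : ∀ a : Qt, DifferentiableAt ℝ (fun z => fderiv ℝ g z a) q := fun a =>
    hdg'.clm_apply (differentiableAt_const a)
  have hQne : Q q ≠ 0 := (hQpos q hq).ne'
  have hm := hmass q hq
  simp only [wedgeGrad, matD, pX1, pX2, pT] at hm ⊢
  set v1 : Qt := (((1 : ℝ), (0 : ℝ)), (0 : ℝ)) with hv1def
  set v2 : Qt := (((0 : ℝ), (1 : ℝ)), (0 : ℝ)) with hv2def
  set vt : Qt := (((0 : ℝ), (0 : ℝ)), (1 : ℝ)) with hvtdef
  rw [pd_mul v1 hdQ hdu.fst, pd_mul v2 hdQ hdu.snd] at hm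
  have hJd : DifferentiableAt ℝ
      (fun z => fderiv ℝ f z v1 * fderiv ℝ g z v2 - fderiv ℝ f z v2 * fderiv ℝ g z v1) q :=
    ((hdfv v1).mul (hdgv v2)).sub ((hdfv v2).mul (hdgv v1))
  rw [pd_matD v2 v1 v2 vt hdu hdg', pd_matD v1 v1 v2 vt hdu hdg',
    pd_matD v2 v1 v2 vt hdu hdf', pd_matD v1 v1 v2 vt hdu hdf',
    pd_div vt hJd hdQ hQne, pd_div v1 hJd hdQ hQne, pd_div v2 hJd hdQ hQne]
  have pdJ : ∀ a : Qt,
      fderiv ℝ (fun z => fderiv ℝ f z v1 * fderiv ℝ g z v2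
        - fderiv ℝ f z v2 * fderiv ℝ g z v1) q a
      = (fderiv ℝ (fun z => fderiv ℝ f z v1) q a * fderiv ℝ g q v2
          + fderiv ℝ f q v1 * fderiv ℝ (fun z => fderiv ℝ g z v2) q a)
        - (fderiv ℝ (fun z => fderiv ℝ f z v2) q a * fderiv ℝ g q v1
          + fderiv ℝ f q v2 * fderiv ℝ (fun z => fderiv ℝ g z v1) q a) := by
    intro a
    rw [pd_sub (a := fun z => fderiv ℝ f z v1 * fderiv ℝ g z v2)
      (b := fun z => fderiv ℝ f z v2 * fderiv ℝ g z v1) a ((hdfv v1).mul (hdgv v2)) ((hdfv v2).mul (hdgv v1)),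
      pd_mul a (hdfv v1) (hdgv v2), pd_mul a (hdfv v2) (hdgv v1)]
  rw [pdJ vt, pdJ v1, pdJ v2]
  rw [pd_second hgq vt v1, pd_second hgq vt v2, pd_second hgq v2 v1,
    pd_second hfq vt v1, pd_second hfq vt v2, pd_second hfq v2 v1]
  have hQt : fderiv ℝ Q q vt
      = -(fderiv ℝ Q q v1 * (u q).1 + Q q * fderiv ℝ (fun z => (u z).1) q v1
          + fderiv ℝ Q q v2 * (u q).2 + Q q * fderiv ℝ (fun z => (u z).2) q v2) := by
    linarith [hm]
  rw [hQt]
  field_simp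
  ring

end
end
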